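/- arXiv:math/0702495 — 5 statements merged into one kernel-verified Lean document; each statement's English description precedes it below -/
import Mathlib

section
/- Let f and g be strictly increasing homeomorphisms of ℝ. (Forward direction) If h is a homeomorphism of ℝ with h ∘ f ∘ h⁻¹ = g, then Γ_f(x) = deg_h · Γ_g(h(x)) for all x ∈ ℝ. (Converse) If h is a homeomorphism of ℝ such that Γ_f(x) = deg_h · Γ_g(h(x)) for all x ∈ ℝ, then there exists a homeomorphism h' of ℝ of the same degree as h (i.e., h' is strictly increasing if h is, and strictly decreasing if h is) with h' ∘ f ∘ h'⁻¹ = g. -/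
/-- `f` is a homeomorphism of `ℝ`: a bijection of `ℝ` that is continuous in both directions. -/
def IsHomeo (f : Equiv.Perm ℝ) : Prop := Continuous f ∧ Continuous f.symm

/-- The signature Γ_f of a map `f : ℝ → ℝ`: `1`, `0` or `-1` according as `f x > x`,
`f x = x` or `f x < x`. -/
noncomputable def signature (f : ℝ → ℝ) (x : ℝ) : ℝ :=
  if x < f x then 1 else if f x = x then 0 else -1

open Classical in
/-- The degree of a homeomorphism of ℝ: 1 if strictly increasing, -1 otherwise. -/
noncomputable def deg (h : Equiv.Perm ℝ) : ℝ := if StrictMono (⇑h) then 1 else -1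



theorem perm_apply_inv_self (p : Equiv.Perm ℝ) (x : ℝ) : p (p⁻¹ x) = x := by
  simp only [Equiv.Perm.coe_inv, Equiv.apply_symm_apply]

theorem perm_inv_apply_self (p : Equiv.Perm ℝ) (x : ℝ) : p⁻¹ (p x) = x := by
  simp only [Equiv.Perm.coe_inv, Equiv.symm_apply_apply]

namespace Stmt11

open Set

/-- The "component" of `x` in the complement of the fixed set of `p`. -/
def Cset (p : ℝ → ℝ) (x : ℝ) : Set ℝ := {y | ∀ t ∈ Set.uIcc x y, t ≠ p t}

lemma mem_Cset_self {p : ℝ → ℝ} {x : ℝ} (hx : x ≠ p x) : x ∈ Cset p x := by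
  intro t ht
  simp only [Set.uIcc_self, Set.mem_singleton_iff] at ht
  subst ht; exact hx

lemma ne_of_mem_Cset {p : ℝ → ℝ} {x y : ℝ} (hy : y ∈ Cset p x) : y ≠ p y :=
  hy y Set.right_mem_uIcc

lemma ne_of_mem_Cset' {p : ℝ → ℝ} {x y : ℝ} (hy : y ∈ Cset p x) : x ≠ p x :=
  hy x Set.left_mem_uIcc

lemma Cset_symm {p : ℝ → ℝ} {x y : ℝ} (hy : y ∈ Cset p x) : x ∈ Cset p y := by
  intro t ht; exact hy t (Set.uIcc_comm x y ▸ ht)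

lemma Cset_trans {p : ℝ → ℝ} {x y z : ℝ} (hy : y ∈ Cset p x) (hz : z ∈ Cset p y) :
    z ∈ Cset p x := by
  intro t ht
  rcases Set.uIcc_subset_uIcc_union_uIcc (b := y) ht with h | h
  · exact hy t h
  · exact hz t h

lemma Cset_eq {p : ℝ → ℝ} {x y : ℝ} (hy : y ∈ Cset p x) : Cset p x = Cset p y := by
  ext z
  exact ⟨fun hz => Cset_trans (Cset_symm hy) hz, fun hz => Cset_trans hy hz⟩

lemma Cset_ordConn {p : ℝ → ℝ} {x y z w : ℝ} (hy : y ∈ Cset p x) (hz : z ∈ Cset p x)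
    (hw : w ∈ Set.uIcc y z) : w ∈ Cset p x := by
  intro t ht
  rcases Set.uIcc_subset_uIcc_union_uIcc (b := y) ht with h | h
  · exact hy t h
  · exact (Cset_eq hy ▸ hz : z ∈ Cset p y) t
      (Set.uIcc_subset_uIcc Set.left_mem_uIcc hw h)

lemma strictMono_inv {p : Equiv.Perm ℝ} (hp : StrictMono ⇑p) : StrictMono ⇑p⁻¹ := by
  intro a b hab
  have := hp.lt_iff_lt (a := p⁻¹ a) (b := p⁻¹ b)
  simp only [perm_apply_inv_self] at this
  exact this.mp hab

lemma strictMono_zpow {p : Equiv.Perm ℝ} (hp : StrictMono ⇑p) (n : ℤ) :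
    StrictMono ⇑(p ^ n) := by
  induction n using Int.induction_on with
  | zero => simpa using strictMono_id
  | succ n ih =>
    have : p ^ ((n : ℤ) + 1) = p * p ^ (n : ℤ) := by rw [add_comm, zpow_add, zpow_one]
    rw [this]
    exact fun a b hab => hp (ih hab)
  | pred n ih =>
    have : p ^ (-(n : ℤ) - 1) = p⁻¹ * p ^ (-(n : ℤ)) := by
      rw [sub_eq_add_neg, add_comm, zpow_add, zpow_neg_one]
    rw [this]
    exact fun a b hab => strictMono_inv hp (ih hab)

lemma perm_zpow_add (p : Equiv.Perm ℝ) (m n : ℤ) (x : ℝ) :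
    (p ^ (m + n)) x = (p ^ m) ((p ^ n) x) := by
  rw [zpow_add]; rfl

lemma fix_inv_iff (p : Equiv.Perm ℝ) (t : ℝ) : t = p⁻¹ t ↔ t = p t := by
  constructor
  · intro h
    have := congrArg (⇑p) h
    simp only [perm_apply_inv_self] at this
    exact this.symm
  · intro h
    have := congrArg (⇑p⁻¹) h
    simp only [perm_inv_apply_self] at this
    exact this.symm

lemma Cset_inv (p : Equiv.Perm ℝ) (x : ℝ) : Cset ⇑p⁻¹ x = Cset ⇑p x := by
  ext y
  exact ⟨fun hy t ht h => hy t ht ((fix_inv_iff p t).mpr h),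
    fun hy t ht h => hy t ht ((fix_inv_iff p t).mp h)⟩

lemma apply_mem_Cset {p : Equiv.Perm ℝ} (hp : StrictMono ⇑p) {x : ℝ} (hx : x ≠ p x) :
    p x ∈ Cset ⇑p x := by
  intro t ht
  rcases lt_or_gt_of_ne hx with hlt | hgt
  · rw [Set.uIcc_of_le hlt.le] at ht
    rcases eq_or_lt_of_le ht.1 with rfl | h
    · exact hx
    · exact ne_of_lt (lt_of_le_of_lt ht.2 (hp h))
  · rw [Set.uIcc_of_ge hgt.le] at ht
    rcases eq_or_lt_of_le ht.2 with rfl | h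
    · exact hx
    · exact ne_of_gt (lt_of_lt_of_le (hp h) ht.1)

lemma mem_Cset_apply {p : Equiv.Perm ℝ} (hp : StrictMono ⇑p) {x y : ℝ}
    (hy : y ∈ Cset ⇑p x) : p y ∈ Cset ⇑p x := by
  rw [Cset_eq hy]
  exact apply_mem_Cset hp (ne_of_mem_Cset hy)

lemma mem_Cset_apply_inv {p : Equiv.Perm ℝ} (hp : StrictMono ⇑p) {x y : ℝ}
    (hy : y ∈ Cset ⇑p x) : p⁻¹ y ∈ Cset ⇑p x := by
  rw [← Cset_inv] at hy ⊢
  exact mem_Cset_apply (strictMono_inv hp) hy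

lemma zpow_mem_Cset {p : Equiv.Perm ℝ} (hp : StrictMono ⇑p) {x y : ℝ}
    (hy : y ∈ Cset ⇑p x) (n : ℤ) : (p ^ n) y ∈ Cset ⇑p x := by
  induction n using Int.induction_on with
  | zero => simpa using hy
  | succ n ih =>
    have : ((p ^ ((n : ℤ) + 1)) y) = p ((p ^ (n : ℤ)) y) := by
      rw [add_comm, perm_zpow_add, zpow_one]
    rw [this]; exact mem_Cset_apply hp ih
  | pred n ih =>
    have : ((p ^ (-(n : ℤ) - 1)) y) = p⁻¹ ((p ^ (-(n : ℤ))) y) := by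
      rw [sub_eq_add_neg, add_comm, perm_zpow_add, zpow_neg_one]
    rw [this]; exact mem_Cset_apply_inv hp ih

lemma sign_pos_of_mem {p : ℝ → ℝ} (hc : Continuous p) {x y : ℝ}
    (hx : x < p x) (hy : y ∈ Cset p x) : y < p y := by
  by_contra hcon
  push_neg at hcon
  have h2 : p y < y := lt_of_le_of_ne hcon (ne_of_mem_Cset hy).symm
  have h0 : (0 : ℝ) ∈ Set.uIcc (p x - x) (p y - y) := by
    rw [Set.uIcc_of_ge (by linarith)]
    constructor <;> [linarith; linarith]
  obtain ⟨t, ht, h0'⟩ := intermediate_value_uIcc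
    (f := fun t => p t - t) ((hc.sub continuous_id).continuousOn) h0
  exact hy t ht (by dsimp at h0'; linarith)

lemma sign_neg_of_mem {p : ℝ → ℝ} (hc : Continuous p) {x y : ℝ}
    (hx : p x < x) (hy : y ∈ Cset p x) : p y < y := by
  by_contra hcon
  push_neg at hcon
  have h2 : y < p y := lt_of_le_of_ne hcon (ne_of_mem_Cset hy)
  have h0 : (0 : ℝ) ∈ Set.uIcc (p x - x) (p y - y) := by
    rw [Set.uIcc_of_le (by linarith)]
    constructor <;> [linarith; linarith]
  obtain ⟨t, ht, h0'⟩ := intermediate_value_uIcc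
    (f := fun t => p t - t) ((hc.sub continuous_id).continuousOn) h0
  exact hy t ht (by dsimp at h0'; linarith)



lemma arch {e : Equiv.Perm ℝ} (hem : StrictMono ⇑e) (hec : Continuous ⇑e)
    {x0 x : ℝ} (hx : x ∈ Cset ⇑e x0) (hup : ∀ t ∈ Cset ⇑e x0, t < e t) :
    ∃ n : ℕ, x < (e ^ n) x0 := by
  by_contra hcon
  push_neg at hcon
  have hx0 : x0 ∈ Cset ⇑e x0 := mem_Cset_self (ne_of_mem_Cset' hx)
  set u : ℕ → ℝ := fun n => (e ^ n) x0 with hu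
  have humem : ∀ n, u n ∈ Cset ⇑e x0 := by
    intro n
    have : ((e : Equiv.Perm ℝ) ^ (n : ℤ)) x0 ∈ Cset ⇑e x0 := zpow_mem_Cset hem hx0 n
    rwa [zpow_natCast] at this
  have hsucc : ∀ n, u (n + 1) = e (u n) := by
    intro n
    simp only [hu, pow_succ']
    rfl
  have humono : Monotone u := monotone_nat_of_le_succ fun n => by
    rw [hsucc]; exact (hup _ (humem n)).le
  have hbdd : BddAbove (Set.range u) := ⟨x, by rintro _ ⟨n, rfl⟩; exact hcon n⟩
  have htend : Filter.Tendsto u Filter.atTop (nhds (⨆ n, u n)) :=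
    tendsto_atTop_ciSup humono hbdd
  set L := ⨆ n, u n with hL
  have htend2 : Filter.Tendsto (fun n => u (n + 1)) Filter.atTop (nhds L) :=
    htend.comp (Filter.tendsto_add_atTop_nat 1)
  have htend3 : Filter.Tendsto (fun n => e (u n)) Filter.atTop (nhds (e L)) :=
    (hec.continuousAt.tendsto).comp htend
  have hfix : e L = L := by
    have : Filter.Tendsto (fun n => u (n + 1)) Filter.atTop (nhds (e L)) := by
      simpa only [hsucc] using htend3
    exact tendsto_nhds_unique this htend2
  have hLmem : L ∈ Set.uIcc x0 x := by
    rw [Set.uIcc_of_le]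
    · exact ⟨le_ciSup hbdd 0, ciSup_le hcon⟩
    · calc x0 = u 0 := by simp [hu]
        _ ≤ x := hcon 0
  exact hx L hLmem hfix.symm

lemma orbit_strictMono {e : Equiv.Perm ℝ} (hem : StrictMono ⇑e) {x0 : ℝ}
    (hx0 : x0 ∈ Cset ⇑e x0) (hup : ∀ t ∈ Cset ⇑e x0, t < e t) :
    StrictMono (fun m : ℤ => (e ^ m) x0) := by
  apply strictMono_int_of_lt_succ
  intro m
  have hmem : (e ^ m) x0 ∈ Cset ⇑e x0 := zpow_mem_Cset hem hx0 m
  have : (e ^ (m + 1)) x0 = e ((e ^ m) x0) := by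
    rw [add_comm, perm_zpow_add, zpow_one]
  rw [this]
  exact hup _ hmem

open Classical in
noncomputable def nfun (e : Equiv.Perm ℝ) (x0 x : ℝ) : ℤ :=
  if h : ∃ n : ℤ, (e ^ n) x0 ≤ x ∧ x < (e ^ (n + 1)) x0 then h.choose else 0

lemma nfun_unique {e : Equiv.Perm ℝ} {x0 : ℝ}
    (horb : StrictMono (fun m : ℤ => (e ^ m) x0)) {x : ℝ} {m n : ℤ}
    (hm : (e ^ m) x0 ≤ x ∧ x < (e ^ (m + 1)) x0)
    (hn : (e ^ n) x0 ≤ x ∧ x < (e ^ (n + 1)) x0) : m = n := by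
  by_contra hne
  rcases lt_or_gt_of_ne hne with h | h
  · have : m + 1 ≤ n := h
    exact absurd (le_trans (horb.monotone this) hn.1) (not_le.mpr hm.2)
  · have : n + 1 ≤ m := h
    exact absurd (le_trans (horb.monotone this) hm.1) (not_le.mpr hn.2)

lemma nfun_eq {e : Equiv.Perm ℝ} {x0 : ℝ}
    (horb : StrictMono (fun m : ℤ => (e ^ m) x0)) {x : ℝ} {m : ℤ}
    (hm : (e ^ m) x0 ≤ x) (hm' : x < (e ^ (m + 1)) x0) : nfun e x0 x = m := by
  have hex : ∃ n : ℤ, (e ^ n) x0 ≤ x ∧ x < (e ^ (n + 1)) x0 := ⟨m, hm, hm'⟩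
  rw [nfun, dif_pos hex]
  exact nfun_unique horb hex.choose_spec ⟨hm, hm'⟩

lemma exists_nfun {e : Equiv.Perm ℝ} (hem : StrictMono ⇑e) (hec : Continuous ⇑e)
    {x0 x : ℝ} (hx : x ∈ Cset ⇑e x0) (hup : ∀ t ∈ Cset ⇑e x0, t < e t) :
    ∃ n : ℤ, (e ^ n) x0 ≤ x ∧ x < (e ^ (n + 1)) x0 := by
  have hx0 : x0 ∈ Cset ⇑e x0 := mem_Cset_self (ne_of_mem_Cset' hx)
  obtain ⟨N, hN⟩ := arch hem hec hx hup
  have hCeq : Cset ⇑e x0 = Cset ⇑e x := Cset_eq hx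
  obtain ⟨M, hM⟩ := arch (x0 := x) (x := x0) hem hec (Cset_symm hx)
    (fun t ht => hup t (hCeq ▸ ht))
  -- hM : x0 < (e ^ M) x  hence (e ^ (-M)) x0 < x
  have hlow : ((e : Equiv.Perm ℝ) ^ (-(M : ℤ))) x0 ≤ x := by
    have hM' : x0 < ((e : Equiv.Perm ℝ) ^ (M : ℤ)) x := by rwa [zpow_natCast]
    have h2 := strictMono_zpow hem (-(M : ℤ)) hM'
    rw [← perm_zpow_add] at h2
    simpa using h2.le
  have horb := orbit_strictMono hem hx0 hup
  have hbdd : ∀ z : ℤ, (e ^ z) x0 ≤ x → z ≤ (N : ℤ) := by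
    intro z hz
    by_contra hcon
    push_neg at hcon
    have : (e ^ (N : ℤ)) x0 ≤ (e ^ z) x0 := horb.monotone hcon.le
    rw [zpow_natCast] at this
    exact absurd (le_trans this hz) (not_le.mpr hN)
  obtain ⟨n, hn, hmax⟩ := Int.exists_greatest_of_bdd ⟨N, fun z hz => hbdd z hz⟩
    ⟨-(M : ℤ), hlow⟩
  refine ⟨n, hn, ?_⟩
  by_contra hcon
  push_neg at hcon
  exact absurd (hmax (n + 1) hcon) (by omega)

lemma nfun_spec {e : Equiv.Perm ℝ} (hem : StrictMono ⇑e) (hec : Continuous ⇑e)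
    {x0 x : ℝ} (hx : x ∈ Cset ⇑e x0) (hup : ∀ t ∈ Cset ⇑e x0, t < e t) :
    (e ^ nfun e x0 x) x0 ≤ x ∧ x < (e ^ (nfun e x0 x + 1)) x0 := by
  obtain ⟨n, h1, h2⟩ := exists_nfun hem hec hx hup
  have hx0 : x0 ∈ Cset ⇑e x0 := mem_Cset_self (ne_of_mem_Cset' hx)
  rw [nfun_eq (orbit_strictMono hem hx0 hup) h1 h2]
  exact ⟨h1, h2⟩

noncomputable def lin (a b c d t : ℝ) : ℝ := c + (d - c) / (b - a) * (t - a)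

lemma lin_strictMono {a b c d : ℝ} (hab : a < b) (hcd : c < d) :
    StrictMono (lin a b c d) := by
  intro s t hst
  unfold lin
  have hpos : 0 < (d - c) / (b - a) := div_pos (by linarith) (by linarith)
  nlinarith

lemma lin_left (a b c d : ℝ) : lin a b c d a = c := by simp [lin]

lemma lin_right {a b : ℝ} (hab : a ≠ b) (c d : ℝ) : lin a b c d b = d := by
  simp only [lin]; field_simp [sub_ne_zero.mpr (Ne.symm hab)]
  ring

lemma lin_lin {a b c d : ℝ} (hab : a ≠ b) (hcd : c ≠ d) (t : ℝ) :
    lin c d a b (lin a b c d t) = t := by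
  simp only [lin]; field_simp [sub_ne_zero.mpr (Ne.symm hab), sub_ne_zero.mpr (Ne.symm hcd)]
  ring



lemma perm_cancel (p : Equiv.Perm ℝ) (n : ℤ) (y : ℝ) : (p ^ (-n)) ((p ^ n) y) = y := by
  rw [← perm_zpow_add]
  simp

lemma perm_succ_apply (p : Equiv.Perm ℝ) (n : ℤ) (x : ℝ) :
    (p ^ (n + 1)) x = p ((p ^ n) x) := by
  rw [add_comm, perm_zpow_add, zpow_one]

lemma perm_succ_apply' (p : Equiv.Perm ℝ) (n : ℤ) (x : ℝ) :
    (p ^ (n + 1)) x = (p ^ n) (p x) := by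
  rw [perm_zpow_add, zpow_one]

noncomputable def Theta (e k : Equiv.Perm ℝ) (x0 y0 x : ℝ) : ℝ :=
  (k ^ nfun e x0 x) (lin x0 (e x0) y0 (k y0) ((e ^ (-(nfun e x0 x))) x))

section Model

variable {e k : Equiv.Perm ℝ} (hem : StrictMono ⇑e) (hkm : StrictMono ⇑k)
  (hec : Continuous ⇑e) (hkc : Continuous ⇑k) {x0 y0 : ℝ}
  (hx0 : x0 ∈ Cset ⇑e x0) (hy0 : y0 ∈ Cset ⇑k y0)
  (hupe : ∀ t ∈ Cset ⇑e x0, t < e t) (hupk : ∀ s ∈ Cset ⇑k y0, s < k s)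

include hem hec hupe in
lemma Theta_arg_mem {x : ℝ} (hx : x ∈ Cset ⇑e x0) :
    x0 ≤ (e ^ (-(nfun e x0 x))) x ∧ (e ^ (-(nfun e x0 x))) x < e x0 := by
  obtain ⟨h1, h2⟩ := nfun_spec hem hec hx hupe
  set n := nfun e x0 x with hn
  constructor
  · have := (strictMono_zpow hem (-n)).monotone h1
    rwa [perm_cancel] at this
  · have := strictMono_zpow hem (-n) h2
    rw [← perm_zpow_add] at this
    simpa using this

lemma lin_mem_Icc {a b c d t : ℝ} (hab : a < b) (hcd : c < d)
    (ht : a ≤ t) (ht' : t < b) : c ≤ lin a b c d t ∧ lin a b c d t < d := by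
  constructor
  · have := (lin_strictMono hab hcd).monotone ht
    rwa [lin_left] at this
  · have := lin_strictMono hab hcd ht'
    rwa [lin_right hab.ne] at this

include hem hkm hec hupe hx0 hy0 hupk in
lemma Theta_mem {x : ℝ} (hx : x ∈ Cset ⇑e x0) :
    Theta e k x0 y0 x ∈ Cset ⇑k y0 := by
  obtain ⟨h1, h2⟩ := Theta_arg_mem hem hec hupe hx
  obtain ⟨h3, h4⟩ := lin_mem_Icc (hupe x0 hx0) (hupk y0 hy0) h1 h2
  have hmem : lin x0 (e x0) y0 (k y0) ((e ^ (-(nfun e x0 x))) x) ∈ Cset ⇑k y0 :=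
    Cset_ordConn hy0 (mem_Cset_apply hkm hy0)
      (by rw [Set.uIcc_of_le (hupk y0 hy0).le]; exact ⟨h3, h4.le⟩)
  exact zpow_mem_Cset hkm hmem _

include hem hec hupe hx0 in
lemma Theta_equivariant {x : ℝ} (hx : x ∈ Cset ⇑e x0) :
    Theta e k x0 y0 (e x) = k (Theta e k x0 y0 x) := by
  obtain ⟨h1, h2⟩ := nfun_spec hem hec hx hupe
  set n := nfun e x0 x with hn
  have horb := orbit_strictMono hem hx0 hupe
  have hnfx : nfun e x0 (e x) = n + 1 := by
    apply nfun_eq horb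
    · rw [perm_succ_apply]
      exact hem.monotone h1
    · rw [perm_succ_apply]
      exact hem h2
  have harg : (e ^ (-(n + 1))) (e x) = (e ^ (-n)) x := by
    conv_lhs => rw [show e x = (e ^ (1 : ℤ)) x by simp]
    rw [← perm_zpow_add]
    norm_num
  show (k ^ nfun e x0 (e x)) _ = _
  rw [hnfx, harg, perm_succ_apply]
  rfl

include hem hkm hec hupe hx0 hy0 hupk in
lemma Theta_lt {x y : ℝ} (hx : x ∈ Cset ⇑e x0) (hy : y ∈ Cset ⇑e x0) (hxy : x < y) :
    Theta e k x0 y0 x < Theta e k x0 y0 y := by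
  obtain ⟨hx1, hx2⟩ := nfun_spec hem hec hx hupe
  obtain ⟨hy1, hy2⟩ := nfun_spec hem hec hy hupe
  obtain ⟨ax1, ax2⟩ := Theta_arg_mem hem hec hupe hx
  obtain ⟨ay1, ay2⟩ := Theta_arg_mem hem hec hupe hy
  set n := nfun e x0 x with hn
  set m := nfun e x0 y with hm
  have horb := orbit_strictMono hem hx0 hupe
  have korb := orbit_strictMono hkm hy0 hupk
  have hlinm := lin_strictMono (hupe x0 hx0) (hupk y0 hy0)
  have hnm : n ≤ m := by
    by_contra hcon
    push_neg at hcon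
    have h1 : m + 1 ≤ n := hcon
    have := le_trans (horb.monotone h1) hx1
    exact absurd (lt_of_lt_of_le hy2 this) (not_lt.mpr hxy.le)
  rcases eq_or_lt_of_le hnm with heq | hlt
  · show (k ^ n) _ < (k ^ m) _
    rw [← heq]
    apply strictMono_zpow hkm
    apply hlinm
    rw [← hn, ← hm, ← heq]
    exact strictMono_zpow hem (-n) hxy
  · obtain ⟨bx1, bx2⟩ := lin_mem_Icc (hupe x0 hx0) (hupk y0 hy0) ax1 ax2
    obtain ⟨by1, by2⟩ := lin_mem_Icc (hupe x0 hx0) (hupk y0 hy0) ay1 ay2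
    show (k ^ n) _ < (k ^ m) _
    calc (k ^ n) (lin x0 (e x0) y0 (k y0) ((e ^ (-n)) x))
        < (k ^ n) (k y0) := strictMono_zpow hkm n bx2
      _ = (k ^ (n + 1)) y0 := (perm_succ_apply' k n y0).symm
      _ ≤ (k ^ m) y0 := korb.monotone (by omega)
      _ ≤ (k ^ m) (lin x0 (e x0) y0 (k y0) ((e ^ (-m)) y)) :=
          (strictMono_zpow hkm m).monotone by1

include hem hkm hec hkc hupe hx0 hy0 hupk in
lemma Theta_surj {y : ℝ} (hy : y ∈ Cset ⇑k y0) :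
    ∃ x ∈ Cset ⇑e x0, Theta e k x0 y0 x = y := by
  obtain ⟨h1, h2⟩ := nfun_spec hkm hkc hy hupk
  set m := nfun k y0 y with hm
  have ht'1 : y0 ≤ (k ^ (-m)) y := by
    have := (strictMono_zpow hkm (-m)).monotone h1
    rwa [perm_cancel] at this
  have ht'2 : (k ^ (-m)) y < k y0 := by
    have := strictMono_zpow hkm (-m) h2
    rw [← perm_zpow_add] at this
    simpa using this
  set t' := (k ^ (-m)) y with ht'
  set l := lin y0 (k y0) x0 (e x0) t' with hl
  obtain ⟨hl1, hl2⟩ := lin_mem_Icc (hupk y0 hy0) (hupe x0 hx0) ht'1 ht'2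
  have hlC : l ∈ Cset ⇑e x0 :=
    Cset_ordConn hx0 (mem_Cset_apply hem hx0)
      (by rw [Set.uIcc_of_le (hupe x0 hx0).le]; exact ⟨hl1, hl2.le⟩)
  refine ⟨(e ^ m) l, zpow_mem_Cset hem hlC m, ?_⟩
  have horb := orbit_strictMono hem hx0 hupe
  have hnf : nfun e x0 ((e ^ m) l) = m := by
    apply nfun_eq horb
    · exact (strictMono_zpow hem m).monotone hl1
    · calc (e ^ m) l < (e ^ m) (e x0) := strictMono_zpow hem m hl2
        _ = (e ^ (m + 1)) x0 := by rw [perm_succ_apply']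
  show (k ^ nfun e x0 ((e ^ m) l)) _ = y
  rw [hnf, perm_cancel, hl, lin_lin (hupk y0 hy0).ne (hupe x0 hx0).ne]
  have hc := perm_cancel k (-m) y
  rw [neg_neg] at hc
  exact hc

end Model



open Classical in
noncomputable def pt (S : Set ℝ) : ℝ := if h : S.Nonempty then h.choose else 0

lemma pt_mem {S : Set ℝ} (h : S.Nonempty) : pt S ∈ S := by
  classical
  rw [pt, dif_pos h]
  exact h.choose_spec

noncomputable def bpt (p : ℝ → ℝ) (x : ℝ) : ℝ := pt (Cset p x)

lemma bpt_mem {p : ℝ → ℝ} {x : ℝ} (hx : x ≠ p x) : bpt p x ∈ Cset p x :=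
  pt_mem ⟨x, mem_Cset_self hx⟩

lemma bpt_eq {p : ℝ → ℝ} {x y : ℝ} (hy : y ∈ Cset p x) : bpt p x = bpt p y := by
  unfold bpt
  rw [Cset_eq hy]

noncomputable def psi (f g : Equiv.Perm ℝ) (φ : ℝ → ℝ) (x : ℝ) : ℝ :=
  if x = f x then φ x
  else if bpt ⇑f x < f (bpt ⇑f x) then Theta f g (bpt ⇑f x) (φ (bpt ⇑f x)) x
  else Theta f⁻¹ g⁻¹ (bpt ⇑f x) (φ (bpt ⇑f x)) x

section CoreSec

variable {f g : Equiv.Perm ℝ} {φ : ℝ ≃o ℝ}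
  (hfc : Continuous ⇑f) (hfc' : Continuous ⇑f⁻¹)
  (hgc : Continuous ⇑g) (hgc' : Continuous ⇑g⁻¹)
  (hfm : StrictMono ⇑f) (hgm : StrictMono ⇑g)
  (sig : ∀ x : ℝ, (x < f x ↔ φ x < g (φ x)) ∧ (f x < x ↔ g (φ x) < φ x))

include sig in
lemma fix_iff : ∀ t : ℝ, t = f t ↔ φ t = g (φ t) := by
  intro t
  constructor
  · intro h2
    by_contra h3
    rcases lt_or_gt_of_ne h3 with h4 | h4
    · exact absurd h2 (ne_of_lt ((sig t).1.mpr h4))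
    · exact absurd h2.symm (ne_of_lt ((sig t).2.mpr h4))
  · intro h2
    by_contra h3
    rcases lt_or_gt_of_ne h3 with h4 | h4
    · exact absurd h2 (ne_of_lt ((sig t).1.mp h4))
    · exact absurd h2.symm (ne_of_lt ((sig t).2.mp h4))

lemma oi_uIcc (φ : ℝ ≃o ℝ) {a b t : ℝ} (ht : t ∈ Set.uIcc a b) :
    φ t ∈ Set.uIcc (φ a) (φ b) := by
  rcases Set.mem_uIcc.mp ht with ⟨h1, h2⟩ | ⟨h1, h2⟩
  · exact Set.mem_uIcc.mpr (Or.inl ⟨φ.le_iff_le.mpr h1, φ.le_iff_le.mpr h2⟩)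
  · exact Set.mem_uIcc.mpr (Or.inr ⟨φ.le_iff_le.mpr h1, φ.le_iff_le.mpr h2⟩)

include sig in
lemma Cset_phi (x : ℝ) : Cset ⇑g (φ x) = ⇑φ '' Cset ⇑f x := by
  ext y
  constructor
  · intro hy
    refine ⟨φ.symm y, ?_, by simp⟩
    intro t ht hfix
    have h1 : φ t ∈ Set.uIcc (φ x) y := by
      have := oi_uIcc φ ht
      simpa using this
    exact hy (φ t) h1 ((fix_iff sig t).mp hfix)
  · rintro ⟨r, hr, rfl⟩
    intro s hs hfix
    have h1 : φ.symm s ∈ Set.uIcc x r := by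
      have := oi_uIcc φ.symm hs
      simpa using this
    refine hr (φ.symm s) h1 ?_
    rw [fix_iff sig]
    simpa using hfix

-- Per-point bundle for a non-fixed x, in the increasing case.
include hfc sig in
lemma up_bundle {x0 : ℝ} (hx0ne : x0 ≠ f x0) (hup : x0 < f x0) :
    (x0 ∈ Cset ⇑f x0) ∧ ((φ x0) ∈ Cset ⇑g (φ x0)) ∧
    (∀ t ∈ Cset ⇑f x0, t < f t) ∧ (∀ s ∈ Cset ⇑g (φ x0), s < g s) := by
  have hx0self : x0 ∈ Cset ⇑f x0 := mem_Cset_self hx0ne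
  have hupe : ∀ t ∈ Cset ⇑f x0, t < f t := fun t ht => sign_pos_of_mem hfc hup ht
  have hy0ne : φ x0 ≠ g (φ x0) := by
    intro hcon
    exact hx0ne ((fix_iff sig x0).mpr hcon)
  refine ⟨hx0self, mem_Cset_self hy0ne, hupe, ?_⟩
  intro s hs
  rw [Cset_phi sig] at hs
  obtain ⟨t, ht, rfl⟩ := hs
  exact (sig t).1.mp (hupe t ht)

include hfc hfm hgm sig in
lemma down_bundle {x0 : ℝ} (hx0ne : x0 ≠ f x0) (hup : ¬ x0 < f x0) :
    (x0 ∈ Cset ⇑f⁻¹ x0) ∧ ((φ x0) ∈ Cset ⇑g⁻¹ (φ x0)) ∧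
    (∀ t ∈ Cset ⇑f⁻¹ x0, t < f⁻¹ t) ∧ (∀ s ∈ Cset ⇑g⁻¹ (φ x0), s < g⁻¹ s) := by
  have hdown : f x0 < x0 := lt_of_le_of_ne (not_lt.mp hup) (Ne.symm hx0ne)
  have hx0self : x0 ∈ Cset ⇑f x0 := mem_Cset_self hx0ne
  have hupe : ∀ t ∈ Cset ⇑f x0, f t < t := fun t ht => sign_neg_of_mem hfc hdown ht
  have hy0ne : φ x0 ≠ g (φ x0) := by
    intro hcon
    exact hx0ne ((fix_iff sig x0).mpr hcon)
  have he : ∀ t ∈ Cset ⇑f⁻¹ x0, t < f⁻¹ t := by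
    intro t ht
    rw [Cset_inv] at ht
    have := strictMono_inv hfm (hupe t ht)
    rwa [perm_inv_apply_self] at this
  have hk : ∀ s ∈ Cset ⇑g⁻¹ (φ x0), s < g⁻¹ s := by
    intro s hs
    rw [Cset_inv, Cset_phi sig] at hs
    obtain ⟨t, ht, rfl⟩ := hs
    have h2 : g (φ t) < φ t := (sig t).2.mp (hupe t ht)
    have := strictMono_inv hgm h2
    rwa [perm_inv_apply_self] at this
  refine ⟨?_, ?_, he, hk⟩
  · rw [Cset_inv]; exact hx0self
  · rw [Cset_inv]; exact mem_Cset_self hy0ne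

include hfc hfc' hgc hgc' hfm hgm sig in
lemma psi_mem {x : ℝ} (hx : x ≠ f x) :
    psi f g ⇑φ x ∈ Cset ⇑g (φ (bpt ⇑f x)) := by
  set x0 := bpt ⇑f x with hx0def
  have hx0C : x0 ∈ Cset ⇑f x := bpt_mem hx
  have hx0ne : x0 ≠ f x0 := ne_of_mem_Cset hx0C
  have hxx0 : x ∈ Cset ⇑f x0 := Cset_eq hx0C ▸ mem_Cset_self hx
  rw [psi, if_neg hx]
  by_cases hup : x0 < f x0
  · obtain ⟨h1, h2, h3, h4⟩ := up_bundle hfc sig hx0ne hup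
    rw [if_pos hup]
    exact Theta_mem hfm hgm hfc h1 h2 h3 h4 hxx0
  · obtain ⟨h1, h2, h3, h4⟩ := down_bundle hfc hfm hgm sig hx0ne hup
    rw [if_neg hup, ← Cset_inv]
    refine Theta_mem (strictMono_inv hfm) (strictMono_inv hgm) hfc' h1 h2 h3 h4 ?_
    rwa [Cset_inv]

include hfc hfc' hfm hgm sig in
lemma psi_equivariant (x : ℝ) : psi f g ⇑φ (f x) = g (psi f g ⇑φ x) := by
  by_cases hx : x = f x
  · rw [← hx]
    simp only [psi, if_pos hx]
    exact (fix_iff sig x).mp hx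
  · set x0 := bpt ⇑f x with hx0def
    have hx0C : x0 ∈ Cset ⇑f x := bpt_mem hx
    have hx0ne : x0 ≠ f x0 := ne_of_mem_Cset hx0C
    have hxx0 : x ∈ Cset ⇑f x0 := Cset_eq hx0C ▸ mem_Cset_self hx
    have hfx : f x ∈ Cset ⇑f x := mem_Cset_apply hfm (mem_Cset_self hx)
    have hfxne : f x ≠ f (f x) := ne_of_mem_Cset hfx
    have hbpt : bpt ⇑f (f x) = x0 := (bpt_eq hfx).symm
    rw [psi, psi, if_neg hx, if_neg hfxne, hbpt]
    by_cases hup : x0 < f x0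
    · rw [if_pos hup, if_pos hup]
      obtain ⟨h1, h2, h3, h4⟩ := up_bundle hfc sig hx0ne hup
      exact Theta_equivariant hfm hfc h1 h3 hxx0
    · rw [if_neg hup, if_neg hup]
      obtain ⟨h1, h2, h3, h4⟩ := down_bundle hfc hfm hgm sig hx0ne hup
      have hxx0' : f x ∈ Cset ⇑f⁻¹ x0 := by
        rw [Cset_inv]
        exact Cset_eq hx0C ▸ hfx
      have key := Theta_equivariant (e := f⁻¹) (k := g⁻¹) (y0 := φ x0) (strictMono_inv hfm) hfc' h1 h3 hxx0'
      rw [perm_inv_apply_self] at key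
      have key2 := congrArg (⇑g) key
      rw [perm_apply_inv_self] at key2
      exact key2.symm

include hfc hfc' hgc hgc' hfm hgm sig in
lemma psi_strictMono : StrictMono (psi f g ⇑φ) := by
  intro x y hxy
  by_cases hx : x = f x <;> by_cases hy : y = f y
  · rw [psi, if_pos hx, psi, if_pos hy]
    exact φ.strictMono hxy
  · -- x fixed, y not
    have hyC := psi_mem hfc hfc' hgc hgc' hfm hgm sig hy
    rw [Cset_phi sig] at hyC
    obtain ⟨c, hc, hcp⟩ := hyC
    have hc' : c ∈ Cset ⇑f y := by
      rw [Cset_eq (bpt_mem hy)]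
      exact hc
    have hxc : x < c := by
      by_contra hcon
      push_neg at hcon
      exact hc' x (Set.mem_uIcc.mpr (Or.inr ⟨hcon, hxy.le⟩)) hx
    rw [psi, if_pos hx, ← hcp]
    exact φ.strictMono hxc
  · -- x not fixed, y fixed
    have hxC := psi_mem hfc hfc' hgc hgc' hfm hgm sig hx
    rw [Cset_phi sig] at hxC
    obtain ⟨c, hc, hcp⟩ := hxC
    have hc' : c ∈ Cset ⇑f x := by
      rw [Cset_eq (bpt_mem hx)]
      exact hc
    have hcy : c < y := by
      by_contra hcon
      push_neg at hcon
      exact hc' y (Set.mem_uIcc.mpr (Or.inl ⟨hxy.le, hcon⟩)) hy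
    rw [← hcp]
    conv_rhs => rw [psi, if_pos hy]
    exact φ.strictMono hcy
  · by_cases hsame : y ∈ Cset ⇑f x
    · have hbpt : bpt ⇑f x = bpt ⇑f y := bpt_eq hsame
      set x0 := bpt ⇑f x with hx0def
      have hx0C : x0 ∈ Cset ⇑f x := bpt_mem hx
      have hx0ne : x0 ≠ f x0 := ne_of_mem_Cset hx0C
      have hxx0 : x ∈ Cset ⇑f x0 := Cset_eq hx0C ▸ mem_Cset_self hx
      have hyx0 : y ∈ Cset ⇑f x0 := Cset_eq hx0C ▸ hsame
      rw [psi, psi, if_neg hx, if_neg hy, ← hbpt]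
      by_cases hup : x0 < f x0
      · rw [if_pos hup, if_pos hup]
        obtain ⟨h1, h2, h3, h4⟩ := up_bundle hfc sig hx0ne hup
        exact Theta_lt hfm hgm hfc h1 h2 h3 h4 hxx0 hyx0 hxy
      · rw [if_neg hup, if_neg hup]
        obtain ⟨h1, h2, h3, h4⟩ := down_bundle hfc hfm hgm sig hx0ne hup
        have hxx0' : x ∈ Cset ⇑f⁻¹ x0 := by rw [Cset_inv]; exact hxx0
        have hyx0' : y ∈ Cset ⇑f⁻¹ x0 := by rw [Cset_inv]; exact hyx0
        exact Theta_lt (strictMono_inv hfm) (strictMono_inv hgm) hfc' h1 h2 h3 h4 hxx0' hyx0' hxy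
    · obtain ⟨t, htmem, htfix⟩ : ∃ t ∈ Set.uIcc x y, t = f t := by
        by_contra hcon
        push_neg at hcon
        exact hsame fun t ht => hcon t ht
      have htx : x ≤ t ∧ t ≤ y := by
        rw [Set.uIcc_of_le hxy.le] at htmem
        exact htmem
      have hxC := psi_mem hfc hfc' hgc hgc' hfm hgm sig hx
      rw [Cset_phi sig] at hxC
      obtain ⟨c, hc, hcp⟩ := hxC
      have hc' : c ∈ Cset ⇑f x := by
        rw [Cset_eq (bpt_mem hx)]
        exact hc
      have hyC := psi_mem hfc hfc' hgc hgc' hfm hgm sig hy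
      rw [Cset_phi sig] at hyC
      obtain ⟨d, hd, hdp⟩ := hyC
      have hd' : d ∈ Cset ⇑f y := by
        rw [Cset_eq (bpt_mem hy)]
        exact hd
      have hct : c < t := by
        by_contra hcon
        push_neg at hcon
        exact hc' t (Set.mem_uIcc.mpr (Or.inl ⟨htx.1, hcon⟩)) htfix
      have htd : t < d := by
        by_contra hcon
        push_neg at hcon
        exact hd' t (Set.mem_uIcc.mpr (Or.inr ⟨hcon, htx.2⟩)) htfix
      rw [← hcp, ← hdp]
      exact φ.strictMono (hct.trans htd)

include hfc hfc' hgc hgc' hfm hgm sig in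
lemma psi_surjective : Function.Surjective (psi f g ⇑φ) := by
  intro y
  by_cases hyF : φ.symm y = f (φ.symm y)
  · refine ⟨φ.symm y, ?_⟩
    rw [psi, if_pos hyF]
    simp
  · set x1 := φ.symm y with hx1def
    have hx1 : x1 ≠ f x1 := hyF
    set x0 := bpt ⇑f x1 with hx0def
    have hx0C : x0 ∈ Cset ⇑f x1 := bpt_mem hx1
    have hx0ne : x0 ≠ f x0 := ne_of_mem_Cset hx0C
    have hyC : y ∈ Cset ⇑g (φ x0) := by
      rw [Cset_phi sig]
      exact ⟨x1, Cset_symm hx0C, by simp [hx1def]⟩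
    by_cases hup : x0 < f x0
    · obtain ⟨h1, h2, h3, h4⟩ := up_bundle hfc sig hx0ne hup
      obtain ⟨x, hxC, hxval⟩ := Theta_surj hfm hgm hfc hgc h1 h2 h3 h4 hyC
      refine ⟨x, ?_⟩
      have hxne : x ≠ f x := ne_of_mem_Cset hxC
      have hbpt : bpt ⇑f x = x0 := by
        have e1 : Cset ⇑f x0 = Cset ⇑f x := Cset_eq hxC
        have e2 : Cset ⇑f x1 = Cset ⇑f x0 := Cset_eq hx0C
        rw [hx0def]
        unfold bpt
        rw [← e1, ← e2]
      rw [psi, if_neg hxne, hbpt, if_pos hup]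
      exact hxval
    · obtain ⟨h1, h2, h3, h4⟩ := down_bundle hfc hfm hgm sig hx0ne hup
      have hyC' : y ∈ Cset ⇑g⁻¹ (φ x0) := by
        rw [Cset_inv]
        exact hyC
      obtain ⟨x, hxC, hxval⟩ := Theta_surj (strictMono_inv hfm) (strictMono_inv hgm)
        hfc' hgc' h1 h2 h3 h4 hyC'
      rw [Cset_inv] at hxC
      refine ⟨x, ?_⟩
      have hxne : x ≠ f x := ne_of_mem_Cset hxC
      have hbpt : bpt ⇑f x = x0 := by
        have e1 : Cset ⇑f x0 = Cset ⇑f x := Cset_eq hxC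
        have e2 : Cset ⇑f x1 = Cset ⇑f x0 := Cset_eq hx0C
        rw [hx0def]
        unfold bpt
        rw [← e1, ← e2]
      rw [psi, if_neg hxne, hbpt, if_neg hup]
      exact hxval

end CoreSec

theorem core (f g : Equiv.Perm ℝ)
    (hfc : Continuous ⇑f) (hfc' : Continuous ⇑f⁻¹)
    (hgc : Continuous ⇑g) (hgc' : Continuous ⇑g⁻¹)
    (hfm : StrictMono ⇑f) (hgm : StrictMono ⇑g) (φ : ℝ ≃o ℝ)
    (sig : ∀ x : ℝ, (x < f x ↔ φ x < g (φ x)) ∧ (f x < x ↔ g (φ x) < φ x)) :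
    ∃ ψ : ℝ ≃o ℝ, ∀ x : ℝ, ψ (f x) = g (ψ x) := by
  refine ⟨StrictMono.orderIsoOfSurjective _
    (psi_strictMono hfc hfc' hgc hgc' hfm hgm sig)
    (psi_surjective hfc hfc' hgc hgc' hfm hgm sig), ?_⟩
  intro x
  show psi f g ⇑φ (f x) = g (psi f g ⇑φ x)
  exact psi_equivariant hfc hfc' hfm hgm sig x





end Stmt11

lemma sig_one_iff (f : ℝ → ℝ) (x : ℝ) : signature f x = 1 ↔ x < f x := by
  unfold signature
  split_ifs with h1 h2
  · simp [h1]
  · norm_num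
    exact not_lt.mp h1
  · norm_num
    exact not_lt.mp h1

lemma sig_zero_iff (f : ℝ → ℝ) (x : ℝ) : signature f x = 0 ↔ f x = x := by
  unfold signature
  split_ifs with h1 h2
  · norm_num
    exact ne_of_gt h1
  · simp [h2]
  · norm_num
    exact h2

lemma sig_negone_iff (f : ℝ → ℝ) (x : ℝ) : signature f x = -1 ↔ f x < x := by
  unfold signature
  split_ifs with h1 h2
  · norm_num
    exact h1.le
  · norm_num
    exact h2.ge
  · norm_num
    exact lt_of_le_of_ne (not_lt.mp h1) h2

lemma deg_pos {h : Equiv.Perm ℝ} (hm : StrictMono ⇑h) : deg h = 1 := by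
  rw [deg, if_pos hm]

lemma deg_neg {h : Equiv.Perm ℝ} (ha : StrictAnti ⇑h) : deg h = -1 := by
  rw [deg, if_neg]
  intro hm
  exact absurd (hm (zero_lt_one)) (ha (zero_lt_one)).asymm

/-- Conjugacy of strictly increasing homeomorphisms of ℝ is governed by signatures:
if h f h⁻¹ = g then Γ_f = deg h · Γ_g ∘ h; conversely if Γ_f = deg h · Γ_g ∘ h for
some homeomorphism h, then f and g are conjugate by a homeomorphism of the same
degree as h. -/
theorem stmt_11 (f g : Equiv.Perm ℝ) (hf : IsHomeo f) (hg : IsHomeo g)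
    (hfm : StrictMono (⇑f)) (hgm : StrictMono (⇑g)) (h : Equiv.Perm ℝ) (hh : IsHomeo h) :
    (h * f * h⁻¹ = g → ∀ x : ℝ, signature (⇑f) x = deg h * signature (⇑g) (h x)) ∧
    ((∀ x : ℝ, signature (⇑f) x = deg h * signature (⇑g) (h x)) →
      ∃ h' : Equiv.Perm ℝ, IsHomeo h' ∧
        (StrictMono (⇑h) → StrictMono (⇑h')) ∧ (StrictAnti (⇑h) → StrictAnti (⇑h')) ∧
        h' * f * h'⁻¹ = g) := by
  have hf' : Continuous ⇑f⁻¹ := hf.2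
  have hg' : Continuous ⇑g⁻¹ := hg.2
  constructor
  · intro hconj x
    have hcomm : g (h x) = h (f x) := by
      have h0 : (h * f * h⁻¹) (h x) = g (h x) := by rw [hconj]
      simp only [Equiv.Perm.mul_apply, perm_inv_apply_self] at h0
      exact h0.symm
    rcases hh.1.strictMono_of_inj h.injective with hm | ha
    · rw [deg_pos hm, one_mul]
      rcases lt_trichotomy x (f x) with hlt | heq | hgt
      · rw [(sig_one_iff ⇑f x).mpr hlt,
          (sig_one_iff ⇑g (h x)).mpr (by rw [hcomm]; exact hm hlt)]
      · rw [(sig_zero_iff ⇑f x).mpr heq.symm,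
          (sig_zero_iff ⇑g (h x)).mpr (by rw [hcomm, ← heq])]
      · rw [(sig_negone_iff ⇑f x).mpr hgt,
          (sig_negone_iff ⇑g (h x)).mpr (by rw [hcomm]; exact hm hgt)]
    · rw [deg_neg ha, neg_one_mul]
      rcases lt_trichotomy x (f x) with hlt | heq | hgt
      · rw [(sig_one_iff ⇑f x).mpr hlt,
          (sig_negone_iff ⇑g (h x)).mpr (by rw [hcomm]; exact ha hlt)]
        norm_num
      · rw [(sig_zero_iff ⇑f x).mpr heq.symm,
          (sig_zero_iff ⇑g (h x)).mpr (by rw [hcomm, ← heq])]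
        norm_num
      · rw [(sig_negone_iff ⇑f x).mpr hgt,
          (sig_one_iff ⇑g (h x)).mpr (by rw [hcomm]; exact ha hgt)]
  · intro hsig
    rcases hh.1.strictMono_of_inj h.injective with hm | ha
    · -- increasing h
      have hsig' : ∀ x, signature ⇑f x = signature ⇑g (h x) := by
        intro x
        rw [hsig x, deg_pos hm, one_mul]
      set φ : ℝ ≃o ℝ := StrictMono.orderIsoOfSurjective ⇑h hm h.surjective with hφdef
      have sigH : ∀ x : ℝ, (x < f x ↔ φ x < g (φ x)) ∧ (f x < x ↔ g (φ x) < φ x) := by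
        intro x
        constructor
        · have e1 := sig_one_iff ⇑f x
          have e2 := sig_one_iff ⇑g (h x)
          rw [hsig' x] at e1
          exact e1.symm.trans e2
        · have e1 := sig_negone_iff ⇑f x
          have e2 := sig_negone_iff ⇑g (h x)
          rw [hsig' x] at e1
          exact e1.symm.trans e2
      obtain ⟨ψ, hψ⟩ := Stmt11.core f g hf.1 hf' hg.1 hg' hfm hgm φ sigH
      refine ⟨ψ.toEquiv, ⟨ψ.continuous, ψ.symm.continuous⟩,
        fun _ => ψ.strictMono, fun hanti => absurd (hm (zero_lt_one)) (hanti (zero_lt_one)).asymm, ?_⟩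
      ext x
      simp only [Equiv.Perm.mul_apply]
      show ψ (f (ψ.toEquiv.symm x)) = g x
      rw [hψ]
      congr 1
      exact ψ.apply_symm_apply x
    · -- decreasing h
      have hsig' : ∀ x, signature ⇑f x = -(signature ⇑g (h x)) := by
        intro x
        rw [hsig x, deg_neg ha]
        ring
      set ρ : Equiv.Perm ℝ := Equiv.neg ℝ with hρdef
      have hρinv : ρ⁻¹ = ρ := rfl
      set g2 : Equiv.Perm ℝ := ρ * g * ρ with hg2def
      have hg2app : ∀ y : ℝ, g2 y = -(g (-y)) := fun y => rfl
      have hg2m : StrictMono ⇑g2 := by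
        intro a b hab
        show -(g (-a)) < -(g (-b))
        have := hgm (neg_lt_neg hab)
        linarith
      have hφ2m : StrictMono (fun x : ℝ => -(h x)) := by
        intro a b hab
        have := ha hab
        dsimp
        linarith
      have hφ2s : Function.Surjective (fun x : ℝ => -(h x)) := by
        intro y
        exact ⟨h.symm (-y), by simp⟩
      set φ : ℝ ≃o ℝ := StrictMono.orderIsoOfSurjective _ hφ2m hφ2s with hφdef
      have hφapp : ∀ x, φ x = -(h x) := fun _ => rfl
      have hkey : ∀ x : ℝ, g2 (φ x) = -(g (h x)) := by
        intro x
        show -(g (-(-(h x)))) = -(g (h x))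
        rw [neg_neg]
      have sigH : ∀ x : ℝ, (x < f x ↔ φ x < g2 (φ x)) ∧ (f x < x ↔ g2 (φ x) < φ x) := by
        intro x
        have e1 := sig_one_iff ⇑f x
        have e2 := sig_negone_iff ⇑g (h x)
        have e3 := sig_negone_iff ⇑f x
        have e4 := sig_one_iff ⇑g (h x)
        have c1 : signature ⇑f x = 1 ↔ signature ⇑g (h x) = -1 := by
          rw [hsig' x]
          constructor <;> intro hh' <;> linarith
        have c2 : signature ⇑f x = -1 ↔ signature ⇑g (h x) = 1 := by
          rw [hsig' x]
          constructor <;> intro hh' <;> linarith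
        constructor
        · rw [hkey x, hφapp x, neg_lt_neg_iff]
          exact e1.symm.trans (c1.trans e2)
        · rw [hkey x, hφapp x, neg_lt_neg_iff]
          exact e3.symm.trans (c2.trans e4)
      have hg2c : Continuous ⇑g2 := by
        have : ⇑g2 = fun y : ℝ => -(g (-y)) := rfl
        rw [this]
        exact (hg.1.comp continuous_neg).neg
      have hg2c' : Continuous ⇑g2⁻¹ := by
        have hinv : g2⁻¹ = ρ * g⁻¹ * ρ := by
          rw [hg2def]
          simp [mul_assoc, hρinv, mul_inv_rev]
        rw [hinv]
        have : ⇑(ρ * g⁻¹ * ρ) = fun y : ℝ => -(g⁻¹ (-y)) := rfl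
        rw [this]
        exact ((hg.2 : Continuous ⇑g⁻¹).comp continuous_neg).neg
      obtain ⟨ψ, hψ⟩ := Stmt11.core f g2 hf.1 hf' hg2c hg2c' hfm hg2m φ sigH
      refine ⟨ρ * ψ.toEquiv, ?_, ?_, ?_, ?_⟩
      · constructor
        · have : ⇑(ρ * ψ.toEquiv) = fun x : ℝ => -(ψ x) := rfl
          rw [this]
          exact ψ.continuous.neg
        · have : ⇑(ρ * ψ.toEquiv).symm = fun x : ℝ => ψ.symm (-x) := rfl
          rw [this]
          exact ψ.symm.continuous.comp continuous_neg
      · intro hmono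
        exact absurd (hmono (zero_lt_one)) (ha (zero_lt_one)).asymm
      · intro _
        intro a b hab
        show -(ψ b) < -(ψ a)
        exact neg_lt_neg (ψ.strictMono hab)
      · ext x
        simp only [Equiv.Perm.mul_apply, mul_inv_rev, hρinv]
        show ρ (ψ (f (ψ.toEquiv.symm (ρ x)))) = g x
        rw [hψ]
        have : ψ.toEquiv (ψ.toEquiv.symm (ρ x)) = ρ x := Equiv.apply_symm_apply _ _
        show ρ (g2 (ψ (ψ.toEquiv.symm (ρ x)))) = g x
        rw [show (ψ (ψ.toEquiv.symm (ρ x)) : ℝ) = ρ x from this]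
        show -(-(g (-(-x)))) = g x
        rw [neg_neg, neg_neg]
end

section
/- Let f and g be strictly decreasing homeomorphisms of ℝ, and let p and q be real numbers with f(p) = p and g(q) = q. Then f and g are conjugate in the group of homeomorphisms of ℝ (i.e., there is a homeomorphism k of ℝ with k ∘ f ∘ k⁻¹ = g) if and only if there is a homeomorphism h of ℝ with h(p) = q and h ∘ f ∘ f ∘ h⁻¹ = g ∘ g. -/
private lemma symm_strictAnti {g : Equiv.Perm ℝ} (hga : StrictAnti (⇑g)) :
    StrictAnti (⇑g.symm) := by
  intro a b hab
  rw [← g.apply_symm_apply a, ← g.apply_symm_apply b] at hab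
  exact (hga.lt_iff_gt).mp hab

/-- Key construction: if h is an increasing homeomorphism with h p = q conjugating f² to g²,
then f and g are conjugate. -/
private lemma conj_of_sq (f g h : Equiv.Perm ℝ) (hf : IsHomeo f) (hg : IsHomeo g)
    (hfa : StrictAnti (⇑f)) (hga : StrictAnti (⇑g)) {p q : ℝ} (hp : f p = p) (hq : g q = q)
    (hh : IsHomeo h) (hmono : StrictMono (⇑h)) (hpq : h p = q)
    (hconj : ∀ x, h (f (f x)) = g (g (h x))) :
    ∃ k : Equiv.Perm ℝ, IsHomeo k ∧ ∀ x, k (f x) = g (k x) := by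
  have hfs : f.symm p = p := f.symm_apply_eq.mpr hp.symm
  have hgs : g.symm q = q := g.symm_apply_eq.mpr hq.symm
  have hfsa : StrictAnti (⇑f.symm) := symm_strictAnti hfa
  have hgsa : StrictAnti (⇑g.symm) := symm_strictAnti hga
  have hhs : StrictMono (⇑h.symm) := by
    intro a b hab
    rw [← h.apply_symm_apply a, ← h.apply_symm_apply b] at hab
    exact hmono.lt_iff_lt.mp hab
  have hhsq : h.symm q = p := h.symm_apply_eq.mpr hpq.symm
  set A : ℝ → ℝ := fun x => g.symm (h (f x)) with hA
  have hAmono : StrictMono A := hgsa.comp (hmono.comp_strictAnti hfa)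
  have hAp : A p = q := by simp only [hA, hp, hpq, hgs]
  set kf : ℝ → ℝ := fun x => if x ≤ p then A x else h x with hkf
  have hkp : kf p = q := by simp [hkf, hAp]
  have hkmono : StrictMono kf := by
    intro x y hxy
    simp only [hkf]
    rcases le_or_gt y p with hy | hy
    · rw [if_pos (hxy.le.trans hy), if_pos hy]; exact hAmono hxy
    · rw [if_neg (not_le.mpr hy)]
      rcases le_or_gt x p with hx | hx
      · rw [if_pos hx]
        calc A x ≤ A p := hAmono.monotone hx
        _ = q := hAp
        _ = h p := hpq.symm
        _ < h y := hmono hy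
      · rw [if_neg (not_le.mpr hx)]; exact hmono hxy
  have hkcont : Continuous kf := by
    apply Continuous.if_le (((hg.2.comp hh.1).comp hf.1)) hh.1 continuous_id
      continuous_const
    intro x hx
    subst hx
    show A x = h x
    exact hAp.trans hpq.symm
  have hksurj : Function.Surjective kf := by
    intro z
    rcases le_or_gt z q with hz | hz
    · refine ⟨f.symm (h.symm (g z)), ?_⟩
      have h1 : q ≤ g z := hq ▸ hga.antitone hz
      have h2 : p ≤ h.symm (g z) := hhsq ▸ hhs.monotone h1
      have h3 : f.symm (h.symm (g z)) ≤ p := hfs ▸ hfsa.antitone h2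
      simp only [hkf, if_pos h3, hA, Equiv.apply_symm_apply, Equiv.symm_apply_apply]
    · refine ⟨h.symm z, ?_⟩
      have h2 : p < h.symm z := hhsq ▸ hhs hz
      simp only [hkf, if_neg (not_le.mpr h2), Equiv.apply_symm_apply]
  let oi : ℝ ≃o ℝ := StrictMono.orderIsoOfSurjective kf hkmono hksurj
  have hoi : ⇑oi = kf := rfl
  let H : ℝ ≃ₜ ℝ := oi.toHomeomorph
  refine ⟨H.toEquiv, ⟨H.continuous, H.symm.continuous⟩, ?_⟩
  have hHcoe : ⇑H.toEquiv = kf := rfl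
  intro x
  rw [show (H.toEquiv : ℝ → ℝ) = kf from rfl]
  rcases lt_trichotomy x p with hx | hx | hx
  · have hfx : p < f x := hp ▸ hfa hx
    simp only [hkf, if_neg (not_le.mpr hfx), if_pos hx.le, hA, Equiv.apply_symm_apply]
  · subst hx
    rw [hp, hkp, hq]
  · have hfx : f x < p := hp ▸ hfa hx
    simp only [hkf, if_pos hfx.le, if_neg (not_le.mpr hx), hA, hconj x,
      Equiv.symm_apply_apply]

/-- Two strictly decreasing homeomorphisms f, g of ℝ with fixed points p, q are conjugate
in H(ℝ) iff f² and g² are conjugate by a homeomorphism taking p to q. -/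
theorem stmt_12 (f g : Equiv.Perm ℝ) (hf : IsHomeo f) (hg : IsHomeo g)
    (hfa : StrictAnti (⇑f)) (hga : StrictAnti (⇑g))
    (p q : ℝ) (hp : f p = p) (hq : g q = q) :
    (∃ k : Equiv.Perm ℝ, IsHomeo k ∧ k * f * k⁻¹ = g) ↔
    (∃ h : Equiv.Perm ℝ, IsHomeo h ∧ h p = q ∧ h * (f * f) * h⁻¹ = g * g) := by
  constructor
  · rintro ⟨k, hk, hkc⟩
    have hpt : ∀ x, k (f x) = g (k x) := by
      intro x
      have : (k * f * k⁻¹) (k x) = g (k x) := by rw [hkc]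
      simpa [Equiv.Perm.mul_apply] using this
    refine ⟨k, hk, ?_, ?_⟩
    · -- k p is a fixed point of g, and g has a unique fixed point
      have hfix : g (k p) = k p := by rw [← hpt p, hp]
      rcases lt_trichotomy (k p) q with h1 | h1 | h1
      · have := hga h1; rw [hfix, hq] at this; exact absurd h1 (not_lt.mpr this.le)
      · exact h1
      · have := hga h1; rw [hfix, hq] at this; exact absurd h1 (not_lt.mpr this.le)
    · rw [← hkc]; group
  · rintro ⟨h, hh, hpq, hhc⟩
    have hpt : ∀ x, h (f (f x)) = g (g (h x)) := by
      intro x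
      have : (h * (f * f) * h⁻¹) (h x) = (g * g) (h x) := by rw [hhc]
      simpa [Equiv.Perm.mul_apply] using this
    have hinj : Function.Injective (⇑h) := h.injective
    obtain ⟨h₀, hh₀, hmono₀, hpq₀, hpt₀⟩ :
        ∃ h₀ : Equiv.Perm ℝ, IsHomeo h₀ ∧ StrictMono (⇑h₀) ∧ h₀ p = q ∧
          ∀ x, h₀ (f (f x)) = g (g (h₀ x)) := by
      rcases hh.1.strictMono_of_inj hinj with hm | ha
      · exact ⟨h, hh, hm, hpq, hpt⟩
      · refine ⟨h * f, ⟨hh.1.comp hf.1, ?_⟩, ?_, ?_, ?_⟩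
        · have : ⇑(h * f).symm = ⇑f.symm ∘ ⇑h.symm := rfl
          rw [this]; exact hf.2.comp hh.2
        · exact ha.comp hfa
        · simp [Equiv.Perm.mul_apply, hp, hpq]
        · intro x
          simp only [Equiv.Perm.mul_apply]
          exact hpt (f x)
    obtain ⟨k, hk, hkpt⟩ := conj_of_sq f g h₀ hf hg hfa hga hp hq hh₀ hmono₀ hpq₀ hpt₀
    refine ⟨k, hk, ?_⟩
    ext x
    simp only [Equiv.Perm.mul_apply]
    rw [hkpt (k⁻¹ x)]
    simp [Equiv.Perm.mul_apply]
end

section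
/- Suppose that f and h are strictly increasing homeomorphisms of ℝ satisfying h ∘ f ∘ h⁻¹ = f⁻¹. Then every fixed point of h is a fixed point of f: if h(p) = p then f(p) = p. -/
/-- If f and h are strictly increasing homeomorphisms of ℝ with h f h⁻¹ = f⁻¹, then every
fixed point of h is a fixed point of f. -/
theorem stmt_13 (f h : Equiv.Perm ℝ) (hf : IsHomeo f) (hh : IsHomeo h)
    (hfm : StrictMono (⇑f)) (hhm : StrictMono (⇑h))
    (hrev : h * f * h⁻¹ = f⁻¹) (p : ℝ) (hp : h p = p) :
    f p = p := by
  have hinv : h⁻¹ p = p := by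
    have := congrArg (⇑h⁻¹) hp
    rw [Equiv.Perm.inv_def, Equiv.symm_apply_apply] at this; exact this.symm
  have key : h (f p) = f⁻¹ p := by
    have := congrFun (congrArg (fun g : Equiv.Perm ℝ => (⇑g : ℝ → ℝ)) hrev) p
    simpa [Equiv.Perm.mul_apply, hinv] using this
  rcases lt_trichotomy (f p) p with hlt | heq | hgt
  · exfalso
    have h1 : h (f p) < p := by have := hhm hlt; rwa [hp] at this
    rw [key] at h1
    have := hfm h1
    rw [Equiv.Perm.inv_def, Equiv.apply_symm_apply] at this
    exact absurd (this.trans hlt) (lt_irrefl p)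
  · exact heq
  · exfalso
    have h1 : p < h (f p) := by
      have := hhm hgt; rwa [hp] at this
    rw [key] at h1
    have := hfm h1
    rw [Equiv.Perm.inv_def, Equiv.apply_symm_apply] at this
    exact absurd (hgt.trans this) (lt_irrefl p)
end

section
/- Let f be a strictly decreasing element of PL(ℝ). Then f is reversible in PL(ℝ) (i.e., there exists h ∈ PL(ℝ) with h ∘ f ∘ h⁻¹ = f⁻¹) if and only if f is an involution (i.e., f ∘ f = id). -/
open Set Filter Topology

/-- `f` is locally affine at `x`: it agrees with an affine map on a neighbourhood of `x`. -/
def IsLocallyAffineAt (f : ℝ → ℝ) (x : ℝ) : Prop :=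
  ∃ a b : ℝ, ∀ᶠ y in nhds x, f y = a * y + b

/-- Membership in PLF(ℝ): a homeomorphism of `ℝ` that is locally affine at all but
finitely many points. -/
def InPLF (f : Equiv.Perm ℝ) : Prop :=
  IsHomeo f ∧ {x : ℝ | ¬ IsLocallyAffineAt (⇑f) x}.Finite

/-- Membership in PL(ℝ): a homeomorphism of `ℝ` whose set of points of non-local-affinity
has no accumulation point in `ℝ`. -/
def InPL (f : Equiv.Perm ℝ) : Prop :=
  IsHomeo f ∧ ∀ x : ℝ, ¬ AccPt x (Filter.principal {y : ℝ | ¬ IsLocallyAffineAt (⇑f) y})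

lemma affine_coeff_eq {a b a' b' y1 y2 : ℝ} (hy : y1 ≠ y2)
    (h1 : a*y1+b = a'*y1+b') (h2 : a*y2+b = a'*y2+b') : a = a' ∧ b = b' := by
  have h3 : a * (y1 - y2) = a' * (y1 - y2) := by ring_nf; linarith
  have ha : a = a' := mul_right_cancel₀ (sub_ne_zero.2 hy) h3
  exact ⟨ha, by rw [ha] at h1; linarith⟩

lemma two_pts {z : ℝ} {s : Set ℝ} (hs : s ∈ 𝓝 z) :
    ∃ y1 ∈ s, ∃ y2 ∈ s, y1 ≠ y2 := by
  obtain ⟨δ, hδ, hball⟩ := Metric.mem_nhds_iff.1 hs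
  have h1 : z ∈ Metric.ball z δ := Metric.mem_ball_self hδ
  have h2 : z + δ/2 ∈ Metric.ball z δ := by
    simp only [Metric.mem_ball, Real.dist_eq]
    have he : z + δ/2 - z = δ/2 := by ring
    rw [he, abs_of_pos (by linarith)]
    linarith
  exact ⟨z, hball h1, z + δ/2, hball h2, by intro hc; linarith [hδ]⟩

/-- locally affine at every point of an open interval implies affine on it -/
lemma affine_on_Ioo {f : ℝ → ℝ} {u v : ℝ} (huv : u < v)
    (hloc : ∀ y ∈ Ioo u v, ∃ a b : ℝ, ∀ᶠ z in 𝓝 y, f z = a * z + b) :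
    ∃ a b : ℝ, ∀ y ∈ Ioo u v, f y = a * y + b := by
  have hx0 : (u+v)/2 ∈ Ioo u v := ⟨by linarith, by linarith⟩
  obtain ⟨a, b, hab⟩ := hloc _ hx0
  set T : Set ℝ := {y | ∀ᶠ z in 𝓝 y, f z = a*z+b} with hTdef
  have hT : IsOpen T := isOpen_setOf_eventually_nhds
  set V : Set ℝ := {y | y ∈ Ioo u v ∧ y ∉ T} with hVdef
  have hV : IsOpen V := by
    rw [isOpen_iff_mem_nhds]
    rintro y ⟨hy1, hy2⟩
    obtain ⟨a', b', hab'⟩ := hloc y hy1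
    have hmem : (Ioo u v ∩ {z | ∀ᶠ w in 𝓝 z, f w = a'*w+b'}) ∈ 𝓝 y := by
      apply inter_mem (isOpen_Ioo.mem_nhds hy1)
      exact hab'.eventually_nhds
    refine mem_of_superset hmem ?_
    rintro z ⟨hz1, hz2⟩
    refine ⟨hz1, fun hzT => ?_⟩
    have hcomb : ∀ᶠ w in 𝓝 z, f w = a*w+b ∧ f w = a'*w+b' := hzT.and hz2
    obtain ⟨y1, hy1', y2, hy2', hne⟩ := two_pts hcomb
    obtain ⟨ha, hb⟩ := affine_coeff_eq hne (hy1'.1.symm.trans hy1'.2) (hy2'.1.symm.trans hy2'.2)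
    exact hy2 (by simp only [hTdef, mem_setOf_eq]; rw [ha, hb]; exact hab')
  have hsub : Ioo u v ⊆ T := by
    by_contra hc
    rw [Set.not_subset] at hc
    obtain ⟨y0, hy0, hy0T⟩ := hc
    have hpre := isPreconnected_Ioo (a := u) (b := v)
    have hcover : Ioo u v ⊆ T ∪ V := by
      intro y hy
      by_cases hyT : y ∈ T
      · exact Or.inl hyT
      · exact Or.inr ⟨hy, hyT⟩
    obtain ⟨z, hz, hzT, hzV⟩ := hpre T V hT hV hcover ⟨_, hx0, hab⟩ ⟨y0, hy0, hy0, hy0T⟩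
    exact hzV.2 hzT
  exact ⟨a, b, fun y hy => (hsub hy).self_of_nhds⟩

/-- punctured neighbourhood of local affinity -/
lemma InPL.punctured {f : Equiv.Perm ℝ} (hf : InPL f) (x : ℝ) :
    ∃ δ > 0, ∀ y : ℝ, y ≠ x → |y - x| < δ → IsLocallyAffineAt (⇑f) y := by
  have h := hf.2 x
  rw [accPt_iff_nhds] at h
  push_neg at h
  obtain ⟨U, hU, hU2⟩ := h
  obtain ⟨δ, hδ, hball⟩ := Metric.mem_nhds_iff.1 hU
  refine ⟨δ, hδ, fun y hyx hyd => ?_⟩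
  by_contra hna
  exact hyx (hU2 y ⟨hball (by simpa [Real.dist_eq] using hyd), hna⟩)

lemma InPL.right_affine {f : Equiv.Perm ℝ} (hf : InPL f) (x : ℝ) :
    ∃ ε > 0, ∃ a : ℝ, ∀ t : ℝ, 0 ≤ t → t < ε → f (x + t) = f x + a * t := by
  obtain ⟨δ, hδ, hloc⟩ := hf.punctured x
  have hIoo : ∀ y ∈ Ioo x (x+δ), ∃ a b : ℝ, ∀ᶠ z in 𝓝 y, (⇑f) z = a * z + b := by
    intro y hy
    exact hloc y (ne_of_gt hy.1) (by rw [abs_of_pos (by linarith [hy.1])]; linarith [hy.2])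
  obtain ⟨a, b, hab⟩ := affine_on_Ioo (by linarith) hIoo
  -- continuity at x from the right
  have hfx : f x = a * x + b := by
    have h1 : Tendsto (⇑f) (𝓝[>] x) (𝓝 (f x)) :=
      (hf.1.1.continuousAt).continuousWithinAt.tendsto
    have h2 : Tendsto (fun y : ℝ => a * y + b) (𝓝[>] x) (𝓝 (a * x + b)) :=
      ((continuous_const.mul continuous_id).add continuous_const).continuousAt.continuousWithinAt.tendsto
    have heq : (⇑f) =ᶠ[𝓝[>] x] (fun y => a * y + b) := by
      filter_upwards [Ioo_mem_nhdsGT_of_mem (by constructor <;> linarith : x ∈ Ico x (x+δ))] with y hy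
      exact hab y hy
    exact tendsto_nhds_unique (h1.congr' heq) h2
  refine ⟨δ, hδ, a, fun t ht0 htδ => ?_⟩
  rcases eq_or_lt_of_le ht0 with h0 | h0
  · simp [← h0]
  · have := hab (x+t) ⟨by linarith, by linarith⟩
    rw [this, hfx]; ring

lemma InPL.left_affine {f : Equiv.Perm ℝ} (hf : InPL f) (x : ℝ) :
    ∃ ε > 0, ∃ a : ℝ, ∀ t : ℝ, 0 ≤ t → t < ε → f (x - t) = f x - a * t := by
  obtain ⟨δ, hδ, hloc⟩ := hf.punctured x
  have hIoo : ∀ y ∈ Ioo (x-δ) x, ∃ a b : ℝ, ∀ᶠ z in 𝓝 y, (⇑f) z = a * z + b := by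
    intro y hy
    exact hloc y (ne_of_lt hy.2) (by rw [abs_of_neg (by linarith [hy.2])]; linarith [hy.1])
  obtain ⟨a, b, hab⟩ := affine_on_Ioo (by linarith) hIoo
  have hfx : f x = a * x + b := by
    have h1 : Tendsto (⇑f) (𝓝[<] x) (𝓝 (f x)) :=
      (hf.1.1.continuousAt).continuousWithinAt.tendsto
    have h2 : Tendsto (fun y : ℝ => a * y + b) (𝓝[<] x) (𝓝 (a * x + b)) :=
      ((continuous_const.mul continuous_id).add continuous_const).continuousAt.continuousWithinAt.tendsto
    have heq : (⇑f) =ᶠ[𝓝[<] x] (fun y => a * y + b) := by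
      filter_upwards [Ioo_mem_nhdsLT_of_mem (by constructor <;> linarith : x ∈ Ioc (x-δ) x)] with y hy
      exact hab y hy
    exact tendsto_nhds_unique (h1.congr' heq) h2
  refine ⟨δ, hδ, a, fun t ht0 htδ => ?_⟩
  rcases eq_or_lt_of_le ht0 with h0 | h0
  · simp [← h0]
  · have := hab (x-t) ⟨by linarith, by linarith⟩
    rw [this, hfx]; ring


lemma ev_pos : ∀ᶠ t in 𝓝[>] (0:ℝ), 0 < t := by
  filter_upwards [self_mem_nhdsWithin] with t ht; exact ht

lemma ev_lt {δ : ℝ} (hδ : 0 < δ) : ∀ᶠ t in 𝓝[>] (0:ℝ), t < δ := by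
  filter_upwards [Ioo_mem_nhdsGT_of_mem (show (0:ℝ) ∈ Ico 0 δ from ⟨le_refl _, hδ⟩)] with t ht
  exact ht.2

lemma ev_small {k δ : ℝ} (hk : 0 < k) (hδ : 0 < δ) : ∀ᶠ t in 𝓝[>] (0:ℝ), k * t < δ := by
  filter_upwards [ev_lt (div_pos hδ hk), ev_pos] with t h1 h2
  calc k*t < k*(δ/k) := (mul_lt_mul_iff_right₀ hk).2 h1
    _ = δ := by field_simp

lemma ev_to_int {P : ℝ → Prop} (h : ∀ᶠ t in 𝓝[>] (0:ℝ), P t) :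
    ∃ δ > 0, ∀ t : ℝ, 0 < t → t < δ → P t := by
  rw [eventually_iff, mem_nhdsGT_iff_exists_Ioo_subset] at h
  obtain ⟨u, hu, hsub⟩ := h
  exact ⟨u, hu, fun t h1 h2 => hsub ⟨h1, h2⟩⟩

lemma exists_fixed (f : Equiv.Perm ℝ) (hc : Continuous ⇑f) (hfa : StrictAnti ⇑f) :
    ∃ p : ℝ, f p = p := by
  rcases lt_trichotomy (f 0) 0 with h | h | h
  · have hgc : ContinuousOn (fun x => f x - x) (Icc (f 0) 0) :=
      (hc.sub continuous_id).continuousOn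
    have hive := intermediate_value_Icc' (le_of_lt h) hgc
    have h1 : f 0 - 0 < 0 := by linarith
    have h2 : 0 < f (f 0) - f 0 := by have := hfa h; linarith
    obtain ⟨p, _, hp⟩ := hive ⟨le_of_lt h1, le_of_lt h2⟩
    exact ⟨p, by dsimp at hp; linarith⟩
  · exact ⟨0, h⟩
  · have hgc : ContinuousOn (fun x => f x - x) (Icc 0 (f 0)) :=
      (hc.sub continuous_id).continuousOn
    have hive := intermediate_value_Icc' (le_of_lt h) hgc
    have h1 : f (f 0) - f 0 < 0 := by have := hfa h; linarith
    have h2 : 0 < f 0 - 0 := by linarith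
    obtain ⟨p, _, hp⟩ := hive ⟨le_of_lt h1, le_of_lt h2⟩
    exact ⟨p, by dsimp at hp; linarith⟩

lemma fixed_unique {f : Equiv.Perm ℝ} (hfa : StrictAnti ⇑f) {p q : ℝ}
    (hp : f p = p) (hq : f q = q) : p = q := by
  rcases lt_trichotomy p q with h | h | h
  · have := hfa h; rw [hp, hq] at this; linarith
  · exact h
  · have := hfa h; rw [hp, hq] at this; linarith

lemma sq1 {m : ℝ} (h0 : 0 < m) (h1 : m * m = 1) : m = 1 := by nlinarith

lemma right_slope_neg {f : Equiv.Perm ℝ} (hfa : StrictAnti ⇑f) {x ε a : ℝ} (hε : 0 < ε)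
    (hg : ∀ t : ℝ, 0 ≤ t → t < ε → f (x + t) = f x + a * t) : a < 0 := by
  have h1 := hg (ε/2) (by linarith) (by linarith)
  have h2 : f (x + ε/2) < f x := hfa (by linarith)
  nlinarith

lemma left_slope_neg {f : Equiv.Perm ℝ} (hfa : StrictAnti ⇑f) {x ε a : ℝ} (hε : 0 < ε)
    (hg : ∀ t : ℝ, 0 ≤ t → t < ε → f (x - t) = f x - a * t) : a < 0 := by
  have h1 := hg (ε/2) (by linarith) (by linarith)
  have h2 : f x < f (x - ε/2) := hfa (by linarith)
  nlinarith

lemma right_slope_ne {f : Equiv.Perm ℝ} {x ε a : ℝ} (hε : 0 < ε)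
    (hg : ∀ t : ℝ, 0 ≤ t → t < ε → f (x + t) = f x + a * t) : a ≠ 0 := by
  intro ha
  have h1 := hg (ε/2) (by linarith) (by linarith)
  rw [ha, zero_mul, add_zero] at h1
  have := f.injective h1
  linarith

lemma left_slope_ne {f : Equiv.Perm ℝ} {x ε a : ℝ} (hε : 0 < ε)
    (hg : ∀ t : ℝ, 0 ≤ t → t < ε → f (x - t) = f x - a * t) : a ≠ 0 := by
  intro ha
  have h1 := hg (ε/2) (by linarith) (by linarith)
  rw [ha, zero_mul, sub_zero] at h1
  have := f.injective h1
  linarith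
theorem Equiv.Perm.apply_inv_self {α : Type*} (f : Equiv.Perm α) (x : α) : f (f⁻¹ x) = x :=
  f.apply_symm_apply x

theorem Equiv.Perm.inv_apply_self {α : Type*} (f : Equiv.Perm α) (x : α) : f⁻¹ (f x) = x :=
  f.symm_apply_apply x

set_option maxHeartbeats 4000000 in
lemma forward (f h : Equiv.Perm ℝ) (hf : InPL f) (hfa : StrictAnti (⇑f))
    (hh : InPL h) (hconj : h * f * h⁻¹ = f⁻¹) : ∀ x : ℝ, f (f x) = x := by
  have hcf : Continuous ⇑f := hf.1.1
  have hch : Continuous ⇑h := hh.1.1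
  -- pointwise conjugacy identities
  have hc0 : ∀ x : ℝ, h (f x) = f⁻¹ (h x) := by
    intro x
    have := congrArg (fun g : Equiv.Perm ℝ => g (h x)) hconj
    simpa [Equiv.Perm.mul_apply, Equiv.Perm.inv_apply_self] using this
  have E1 : ∀ x : ℝ, f (h (f x)) = h x := by
    intro x
    rw [hc0 x, Equiv.Perm.apply_inv_self]
  have E2 : ∀ x : ℝ, f (f (h (f (f x)))) = h x := by
    intro x
    rw [E1 (f x), E1 x]
  have hc0inv : ∀ z : ℝ, f (h⁻¹ z) = h⁻¹ (f⁻¹ z) := by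
    intro z
    have h1 := hc0 (h⁻¹ z)
    rw [Equiv.Perm.apply_inv_self] at h1
    have h2 := congrArg (⇑h⁻¹) h1
    rwa [Equiv.Perm.inv_apply_self] at h2
  -- inverse is strictly anti
  have hfainv : ∀ {a b : ℝ}, a < b → f⁻¹ b < f⁻¹ a := by
    intro a b hab
    rcases lt_trichotomy (f⁻¹ b) (f⁻¹ a) with hc | hc | hc
    · exact hc
    · exfalso
      have := congrArg (⇑f) hc
      rw [Equiv.Perm.apply_inv_self, Equiv.Perm.apply_inv_self] at this
      linarith
    · exfalso
      have := hfa hc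
      rw [Equiv.Perm.apply_inv_self, Equiv.Perm.apply_inv_self] at this
      linarith
  -- fixed point
  obtain ⟨p, hp⟩ := exists_fixed f hcf hfa
  have hhp : h p = p := by
    have h1 := hc0 p
    rw [hp] at h1
    have h2 : f (h p) = h p := by
      conv_lhs => rw [h1]
      rw [Equiv.Perm.apply_inv_self]
    exact fixed_unique hfa h2 hp
  -- germs of f and h at p
  obtain ⟨ε1, hε1, aP, hfPraw⟩ := hf.right_affine p
  obtain ⟨ε2, hε2, aM, hfMraw⟩ := hf.left_affine p
  obtain ⟨η1, hη1, cP, hhPraw⟩ := hh.right_affine p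
  obtain ⟨η2, hη2, cM, hhMraw⟩ := hh.left_affine p
  have haP : aP < 0 := right_slope_neg hfa hε1 hfPraw
  have haM : aM < 0 := left_slope_neg hfa hε2 hfMraw
  have hcP : cP ≠ 0 := right_slope_ne hη1 hhPraw
  have hcM : cM ≠ 0 := left_slope_ne hη2 hhMraw
  have hfP' : ∀ t : ℝ, 0 ≤ t → t < ε1 → f (p + t) = p + aP * t := fun t h1 h2 => by
    rw [hfPraw t h1 h2, hp]
  have hfM' : ∀ t : ℝ, 0 ≤ t → t < ε2 → f (p - t) = p - aM * t := fun t h1 h2 => by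
    rw [hfMraw t h1 h2, hp]
  have hhP' : ∀ t : ℝ, 0 ≤ t → t < η1 → h (p + t) = p + cP * t := fun t h1 h2 => by
    rw [hhPraw t h1 h2, hhp]
  have hhM' : ∀ t : ℝ, 0 ≤ t → t < η2 → h (p - t) = p - cM * t := fun t h1 h2 => by
    rw [hhMraw t h1 h2, hhp]
  -- the four slope equations
  have EqA : 0 < cM → aM * (cM * aP) = cP := by
    intro hcMpos
    have hev : ∀ᶠ t in 𝓝[>] (0:ℝ), (aM * (cM * aP)) * t = cP * t := by
      filter_upwards [ev_pos, ev_lt hε1, ev_small (neg_pos.2 haP) hη2,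
        ev_small (mul_pos hcMpos (neg_pos.2 haP)) hε2, ev_lt hη1] with t ht0 h2 h3 h4 h5
      have e1 : f (p + t) = p + aP * t := hfP' t (le_of_lt ht0) h2
      have e2 : h (p + aP * t) = p - cM * ((-aP) * t) := by
        have hr : p + aP * t = p - (-aP) * t := by ring
        rw [hr]
        exact hhM' ((-aP)*t) (mul_nonneg (by linarith) (le_of_lt ht0)) h3
      have e3 : f (p - cM * ((-aP) * t)) = p - aM * ((cM * (-aP)) * t) := by
        have hr : p - cM * ((-aP) * t) = p - (cM * (-aP)) * t := by ring
        rw [hr]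
        exact hfM' ((cM * (-aP))*t)
          (mul_nonneg (mul_nonneg (le_of_lt hcMpos) (by linarith)) (le_of_lt ht0)) h4
      have e4 : h (p + t) = p + cP * t := hhP' t (le_of_lt ht0) h5
      have key := E1 (p + t)
      rw [e1, e2, e3, e4] at key
      linear_combination key
    obtain ⟨t, hteq, ht0⟩ := (hev.and ev_pos).exists
    exact mul_right_cancel₀ (ne_of_gt ht0) hteq
  have EqA' : cM < 0 → aP * (cM * aP) = cP := by
    intro hcMneg
    have hev : ∀ᶠ t in 𝓝[>] (0:ℝ), (aP * (cM * aP)) * t = cP * t := by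
      filter_upwards [ev_pos, ev_lt hε1, ev_small (neg_pos.2 haP) hη2,
        ev_small (mul_pos_of_neg_of_neg hcMneg haP) hε1, ev_lt hη1] with t ht0 h2 h3 h4 h5
      have e1 : f (p + t) = p + aP * t := hfP' t (le_of_lt ht0) h2
      have e2 : h (p + aP * t) = p - cM * ((-aP) * t) := by
        have hr : p + aP * t = p - (-aP) * t := by ring
        rw [hr]
        exact hhM' ((-aP)*t) (mul_nonneg (by linarith) (le_of_lt ht0)) h3
      have e3 : f (p - cM * ((-aP) * t)) = p + aP * ((cM * aP) * t) := by
        have hr : p - cM * ((-aP) * t) = p + (cM * aP) * t := by ring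
        rw [hr]
        exact hfP' ((cM * aP)*t)
          (mul_nonneg (le_of_lt (mul_pos_of_neg_of_neg hcMneg haP)) (le_of_lt ht0)) h4
      have e4 : h (p + t) = p + cP * t := hhP' t (le_of_lt ht0) h5
      have key := E1 (p + t)
      rw [e1, e2, e3, e4] at key
      linear_combination key
    obtain ⟨t, hteq, ht0⟩ := (hev.and ev_pos).exists
    exact mul_right_cancel₀ (ne_of_gt ht0) hteq
  have EqB : 0 < cP → aP * (cP * aM) = cM := by
    intro hcPpos
    have hev : ∀ᶠ t in 𝓝[>] (0:ℝ), (aP * (cP * aM)) * t = cM * t := by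
      filter_upwards [ev_pos, ev_lt hε2, ev_small (neg_pos.2 haM) hη1,
        ev_small (mul_pos hcPpos (neg_pos.2 haM)) hε1, ev_lt hη2] with t ht0 h2 h3 h4 h5
      have e1 : f (p - t) = p - aM * t := hfM' t (le_of_lt ht0) h2
      have e2 : h (p - aM * t) = p + cP * ((-aM) * t) := by
        have hr : p - aM * t = p + (-aM) * t := by ring
        rw [hr]
        exact hhP' ((-aM)*t) (mul_nonneg (by linarith) (le_of_lt ht0)) h3
      have e3 : f (p + cP * ((-aM) * t)) = p + aP * ((cP * (-aM)) * t) := by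
        have hr : p + cP * ((-aM) * t) = p + (cP * (-aM)) * t := by ring
        rw [hr]
        exact hfP' ((cP * (-aM))*t)
          (mul_nonneg (mul_nonneg (le_of_lt hcPpos) (by linarith)) (le_of_lt ht0)) h4
      have e4 : h (p - t) = p - cM * t := hhM' t (le_of_lt ht0) h5
      have key := E1 (p - t)
      rw [e1, e2, e3, e4] at key
      linear_combination -key
    obtain ⟨t, hteq, ht0⟩ := (hev.and ev_pos).exists
    exact mul_right_cancel₀ (ne_of_gt ht0) hteq
  have EqB' : cP < 0 → aM * (cP * aM) = cM := by
    intro hcPneg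
    have hev : ∀ᶠ t in 𝓝[>] (0:ℝ), (aM * (cP * aM)) * t = cM * t := by
      filter_upwards [ev_pos, ev_lt hε2, ev_small (neg_pos.2 haM) hη1,
        ev_small (mul_pos_of_neg_of_neg hcPneg haM) hε2, ev_lt hη2] with t ht0 h2 h3 h4 h5
      have e1 : f (p - t) = p - aM * t := hfM' t (le_of_lt ht0) h2
      have e2 : h (p - aM * t) = p + cP * ((-aM) * t) := by
        have hr : p - aM * t = p + (-aM) * t := by ring
        rw [hr]
        exact hhP' ((-aM)*t) (mul_nonneg (by linarith) (le_of_lt ht0)) h3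
      have e3 : f (p + cP * ((-aM) * t)) = p - aM * ((cP * aM) * t) := by
        have hr : p + cP * ((-aM) * t) = p - (cP * aM) * t := by ring
        rw [hr]
        exact hfM' ((cP * aM)*t)
          (mul_nonneg (le_of_lt (mul_pos_of_neg_of_neg hcPneg haM)) (le_of_lt ht0)) h4
      have e4 : h (p - t) = p - cM * t := hhM' t (le_of_lt ht0) h5
      have key := E1 (p - t)
      rw [e1, e2, e3, e4] at key
      linear_combination -key
    obtain ⟨t, hteq, ht0⟩ := (hev.and ev_pos).exists
    exact mul_right_cancel₀ (ne_of_gt ht0) hteq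
  -- the product of the two slopes of f at p equals 1
  have hm : aP * aM = 1 := by
    rcases lt_or_gt_of_ne hcM with h1 | h1 <;> rcases lt_or_gt_of_ne hcP with h2 | h2
    · -- cM < 0, cP < 0
      have e1 := EqA' h1
      have e2 := EqB' h2
      have e3 : (aP * aM * (aP * aM) - 1) * cP = 0 := by linear_combination e1 + aP * aP * e2
      rcases mul_eq_zero.1 e3 with h3 | h3
      · exact sq1 (mul_pos_of_neg_of_neg haP haM) (by linarith)
      · exfalso; linarith
    · -- cM < 0, cP > 0 : impossible
      exfalso
      have e1 := EqA' h1
      nlinarith [mul_neg_of_neg_of_pos h1 (mul_pos_of_neg_of_neg haP haP)]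
    · -- cM > 0, cP < 0 : impossible
      exfalso
      have e1 := EqA h1
      nlinarith [mul_pos (mul_pos_of_neg_of_neg haM haP) h1]
    · -- cM > 0, cP > 0
      have e1 := EqA h1
      have e2 := EqB h2
      have e3 : (aP * aM * (aP * aM) - 1) * cM = 0 := by
        linear_combination aP * aM * e1 + e2
      rcases mul_eq_zero.1 e3 with h3 | h3
      · exact sq1 (mul_pos_of_neg_of_neg haP haM) (by linarith)
      · exfalso; linarith
  -- f ∘ f is the identity near p
  have hFixNear : ∀ᶠ t in 𝓝[>] (0:ℝ), f (f (p + t)) = p + t ∧ f (f (p - t)) = p - t := by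
    filter_upwards [ev_pos, ev_lt hε1, ev_small (neg_pos.2 haP) hε2, ev_lt hε2,
      ev_small (neg_pos.2 haM) hε1] with t ht0 h2 h3 h4 h5
    constructor
    · have e1 : f (p + t) = p + aP * t := hfP' t (le_of_lt ht0) h2
      have e2 : f (p + aP * t) = p - aM * ((-aP) * t) := by
        have hr : p + aP * t = p - (-aP) * t := by ring
        rw [hr]
        exact hfM' ((-aP)*t) (mul_nonneg (by linarith) (le_of_lt ht0)) h3
      rw [e1, e2]
      linear_combination t * hm
    · have e1 : f (p - t) = p - aM * t := hfM' t (le_of_lt ht0) h4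
      have e2 : f (p - aM * t) = p + aP * ((-aM) * t) := by
        have hr : p - aM * t = p + (-aM) * t := by ring
        rw [hr]
        exact hfP' ((-aM)*t) (mul_nonneg (by linarith) (le_of_lt ht0)) h5
      rw [e1, e2]
      linear_combination (-t) * hm
  obtain ⟨δ, hδ, hnear⟩ := ev_to_int hFixNear
  -- suppose f ∘ f is not the identity
  by_contra hcon
  push_neg at hcon
  obtain ⟨w, hw⟩ := hcon
  -- transfer of fixedness
  have hpfix : f (f p) = p := by rw [hp, hp]
  have Hf : ∀ x : ℝ, f (f x) = x → f (f (f x)) = f x := fun x hx => by rw [hx]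
  have Hfinvfix : ∀ x : ℝ, f (f x) = x → f⁻¹ x = f x := by
    intro x hx
    have h1 := congrArg (⇑f⁻¹) hx
    rw [Equiv.Perm.inv_apply_self] at h1
    exact h1.symm
  have Hfinv : ∀ x : ℝ, f (f x) = x → f (f (f⁻¹ x)) = f⁻¹ x := by
    intro x hx
    rw [Equiv.Perm.apply_inv_self]
    exact (Hfinvfix x hx).symm
  have Hh : ∀ x : ℝ, f (f x) = x → f (f (h x)) = h x := by
    intro x hx
    have := E2 x
    rwa [hx] at this
  have Hhinv : ∀ x : ℝ, f (f x) = x → f (f (h⁻¹ x)) = h⁻¹ x := by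
    intro x hx
    rw [hc0inv x, hc0inv (f⁻¹ x)]
    have h1 : f⁻¹ (f⁻¹ x) = x := by
      rw [Hfinvfix x hx, Equiv.Perm.inv_apply_self]
    rw [h1]
  -- the sets of non-fixed points on each side of p
  set R : Set ℝ := {x : ℝ | p < x ∧ f (f x) ≠ x} with hRdef
  set L : Set ℝ := {x : ℝ | x < p ∧ f (f x) ≠ x} with hLdef
  have emptyR : (∀ x : ℝ, p < x → f (f x) = x) → ∀ x : ℝ, f (f x) = x := by
    intro hall x
    rcases lt_trichotomy p x with hx | hx | hx
    · exact hall x hx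
    · rw [← hx]; exact hpfix
    · have h1 : p < f⁻¹ x := by
        have := hfainv hx
        rwa [← hp, Equiv.Perm.inv_apply_self] at this
      have h2 := hall (f⁻¹ x) h1
      have h3 := Hf _ h2
      rwa [Equiv.Perm.apply_inv_self] at h3
  have emptyL : (∀ x : ℝ, x < p → f (f x) = x) → ∀ x : ℝ, f (f x) = x := by
    intro hall x
    rcases lt_trichotomy x p with hx | hx | hx
    · exact hall x hx
    · rw [hx]; exact hpfix
    · have h1 : f⁻¹ x < p := by
        have := hfainv hx
        rwa [← hp, Equiv.Perm.inv_apply_self] at this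
      have h2 := hall (f⁻¹ x) h1
      have h3 := Hf _ h2
      rwa [Equiv.Perm.apply_inv_self] at h3
  have hRne : R.Nonempty := by
    by_contra hRe
    rw [Set.not_nonempty_iff_eq_empty] at hRe
    apply hw
    apply emptyR
    intro x hx
    by_contra hne
    have : x ∈ R := ⟨hx, hne⟩
    rw [hRe] at this
    exact this
  have hLne : L.Nonempty := by
    by_contra hLe
    rw [Set.not_nonempty_iff_eq_empty] at hLe
    apply hw
    apply emptyL
    intro x hx
    by_contra hne
    have : x ∈ L := ⟨hx, hne⟩
    rw [hLe] at this
    exact this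
  have hbddR : BddBelow R := ⟨p, fun x hx => le_of_lt hx.1⟩
  have hbddL : BddAbove L := ⟨p, fun x hx => le_of_lt hx.1⟩
  set u : ℝ := sInf R with hudef
  set l : ℝ := sSup L with hldef
  have hple : p + δ ≤ u := by
    apply le_csInf hRne
    intro x hx
    by_contra hxc
    push_neg at hxc
    have h1 : 0 < x - p := by linarith [hx.1]
    have h2 : x - p < δ := by linarith
    have h3 := (hnear (x - p) h1 h2).1
    rw [show p + (x - p) = x by ring] at h3
    exact hx.2 h3
  have hpu : p < u := by linarith
  have hlle : l ≤ p - δ := by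
    apply csSup_le hLne
    intro x hx
    by_contra hxc
    push_neg at hxc
    have h1 : 0 < p - x := by linarith [hx.1]
    have h2 : p - x < δ := by linarith
    have h3 := (hnear (p - x) h1 h2).2
    rw [show p - (p - x) = x by ring] at h3
    exact hx.2 h3
  have hlp : l < p := by linarith
  have hufixlt : ∀ x : ℝ, p ≤ x → x < u → f (f x) = x := by
    intro x h1 h2
    rcases eq_or_lt_of_le h1 with he | hlt
    · rw [← he]; exact hpfix
    · by_contra hne
      have : x ∈ R := ⟨hlt, hne⟩
      have := csInf_le hbddR this
      linarith
  have hlfixgt : ∀ x : ℝ, l < x → x ≤ p → f (f x) = x := by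
    intro x h1 h2
    rcases eq_or_lt_of_le h2 with he | hlt
    · rw [he]; exact hpfix
    · by_contra hne
      have : x ∈ L := ⟨hlt, hne⟩
      have := le_csSup hbddL this
      linarith
  have hcff : Continuous (fun x : ℝ => f (f x)) := hcf.comp hcf
  have hufix : f (f u) = u := by
    have h1 : Tendsto (fun x : ℝ => f (f x)) (𝓝[<] u) (𝓝 (f (f u))) :=
      hcff.continuousAt.continuousWithinAt.tendsto
    have h2 : Tendsto (fun x : ℝ => x) (𝓝[<] u) (𝓝 u) :=
      tendsto_id.mono_left nhdsWithin_le_nhds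
    have heq : (fun x : ℝ => f (f x)) =ᶠ[𝓝[<] u] (fun x : ℝ => x) := by
      filter_upwards [Ioo_mem_nhdsLT_of_mem (show u ∈ Ioc p u from ⟨hpu, le_refl u⟩)] with x hx
      exact hufixlt x (le_of_lt hx.1) hx.2
    exact tendsto_nhds_unique (h1.congr' heq) h2
  have hlfix : f (f l) = l := by
    have h1 : Tendsto (fun x : ℝ => f (f x)) (𝓝[>] l) (𝓝 (f (f l))) :=
      hcff.continuousAt.continuousWithinAt.tendsto
    have h2 : Tendsto (fun x : ℝ => x) (𝓝[>] l) (𝓝 l) :=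
      tendsto_id.mono_left nhdsWithin_le_nhds
    have heq : (fun x : ℝ => f (f x)) =ᶠ[𝓝[>] l] (fun x : ℝ => x) := by
      filter_upwards [Ioo_mem_nhdsGT_of_mem (show l ∈ Ico l p from ⟨le_refl l, hlp⟩)] with x hx
      exact hlfixgt x hx.1 (le_of_lt hx.2)
    exact tendsto_nhds_unique (h1.congr' heq) h2
  have hIcc : ∀ x : ℝ, l ≤ x → x ≤ u → f (f x) = x := by
    intro x h1 h2
    rcases le_or_gt x p with h3 | h3
    · rcases eq_or_lt_of_le h1 with he | hlt
      · rw [← he]; exact hlfix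
      · exact hlfixgt x hlt h3
    · rcases eq_or_lt_of_le h2 with he | hlt
      · rw [he]; exact hufix
      · exact hufixlt x (le_of_lt h3) hlt
  -- germs of f at u (right) and at f u (left)
  have hqp : f u < p := by
    have := hfa hpu
    rwa [hp] at this
  obtain ⟨εA, hεA, sA, hAraw⟩ := hf.right_affine u
  obtain ⟨εB, hεB, sB, hBraw⟩ := hf.left_affine (f u)
  have hsA : sA < 0 := right_slope_neg hfa hεA hAraw
  have hsB : sB < 0 := left_slope_neg hfa hεB hBraw
  have hB' : ∀ s : ℝ, 0 ≤ s → s < εB → f (f u - s) = u - sB * s := fun s h1 h2 => by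
    rw [hBraw s h1 h2, hufix]
  set k : ℝ := sA * sB with hkdef
  have hk : 0 < k := mul_pos_of_neg_of_neg hsA hsB
  have hkgermev : ∀ᶠ t in 𝓝[>] (0:ℝ), f (f (u + t)) = u + k * t := by
    filter_upwards [ev_pos, ev_lt hεA, ev_small (neg_pos.2 hsA) hεB] with t ht0 h2 h3
    have e1 : f (u + t) = f u + sA * t := hAraw t (le_of_lt ht0) h2
    have e2 : f (f u + sA * t) = u - sB * ((-sA) * t) := by
      have hr : f u + sA * t = f u - (-sA) * t := by ring
      rw [hr]
      exact hB' ((-sA)*t) (mul_nonneg (by linarith) (le_of_lt ht0)) h3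
    rw [e1, e2, hkdef]
    ring
  obtain ⟨δU, hδU, hkint⟩ := ev_to_int hkgermev
  have hkne : k ≠ 1 := by
    intro hk1
    have hex : ∃ x ∈ R, x < u + δU := by
      by_contra hcc
      push_neg at hcc
      have := le_csInf hRne hcc
      linarith
    obtain ⟨x, hxR, hxlt⟩ := hex
    have hxu : u ≤ x := csInf_le hbddR hxR
    have hxne : x ≠ u := by
      intro he
      apply hxR.2
      rw [he]
      exact hufix
    have hxgt : u < x := lt_of_le_of_ne hxu (Ne.symm hxne)
    have h3 := hkint (x - u) (by linarith) (by linarith)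
    rw [hk1, one_mul, show u + (x - u) = x by ring] at h3
    exact hxR.2 h3
  have hFixFreeU : ∀ t : ℝ, 0 < t → t < δU → f (f (u + t)) ≠ u + t := by
    intro t h1 h2 hcc
    rw [hkint t h1 h2] at hcc
    apply hkne
    have : k * t = 1 * t := by linarith
    exact mul_right_cancel₀ (ne_of_gt h1) this
  -- germs of f at l (left) and at f l (right)
  have hpq2 : p < f l := by
    have := hfa hlp
    rwa [hp] at this
  obtain ⟨εC, hεC, sC, hCraw⟩ := hf.left_affine l
  obtain ⟨εD, hεD, sD, hDraw⟩ := hf.right_affine (f l)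
  have hsC : sC < 0 := left_slope_neg hfa hεC hCraw
  have hsD : sD < 0 := right_slope_neg hfa hεD hDraw
  have hD' : ∀ t : ℝ, 0 ≤ t → t < εD → f (f l + t) = l + sD * t := fun t h1 h2 => by
    rw [hDraw t h1 h2, hlfix]
  set k2 : ℝ := sC * sD with hk2def
  have hkk2 : 0 < k2 := mul_pos_of_neg_of_neg hsC hsD
  have hk2germev : ∀ᶠ s in 𝓝[>] (0:ℝ), f (f (l - s)) = l - k2 * s := by
    filter_upwards [ev_pos, ev_lt hεC, ev_small (neg_pos.2 hsC) hεD] with s hs0 h2 h3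
    have e1 : f (l - s) = f l - sC * s := hCraw s (le_of_lt hs0) h2
    have e2 : f (f l - sC * s) = l + sD * ((-sC) * s) := by
      have hr : f l - sC * s = f l + (-sC) * s := by ring
      rw [hr]
      exact hD' ((-sC)*s) (mul_nonneg (by linarith) (le_of_lt hs0)) h3
    rw [e1, e2, hk2def]
    ring
  obtain ⟨δL, hδL, hk2int⟩ := ev_to_int hk2germev
  have hk2ne : k2 ≠ 1 := by
    intro hk1
    have hex : ∃ x ∈ L, l - δL < x := by
      by_contra hcc
      push_neg at hcc
      have := csSup_le hLne hcc
      linarith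
    obtain ⟨x, hxL, hxlt⟩ := hex
    have hxu : x ≤ l := le_csSup hbddL hxL
    have hxne : x ≠ l := by
      intro he
      apply hxL.2
      rw [he]
      exact hlfix
    have hxgt : x < l := lt_of_le_of_ne hxu hxne
    have h3 := hk2int (l - x) (by linarith) (by linarith)
    rw [hk1, one_mul, show l - (l - x) = x by ring] at h3
    exact hxL.2 h3
  have hFixFreeL : ∀ s : ℝ, 0 < s → s < δL → f (f (l - s)) ≠ l - s := by
    intro s h1 h2 hcc
    rw [hk2int s h1 h2] at hcc
    apply hk2ne
    have : k2 * s = 1 * s := by linarith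
    exact mul_right_cancel₀ (ne_of_gt h1) this
  -- f maps u to l
  have hful : f u = l := by
    rcases lt_trichotomy (f u) l with hcase | hcase | hcase
    · exfalso
      set y : ℝ := (max (f u) (l - δL) + l) / 2 with hydef
      have hy1 : f u < y := by
        have h1 : max (f u) (l - δL) < l := max_lt hcase (by linarith)
        have h2 : f u ≤ max (f u) (l - δL) := le_max_left _ _
        rw [hydef]; linarith
      have hy2 : l - δL < y := by
        have h1 : max (f u) (l - δL) < l := max_lt hcase (by linarith)
        have h2 : l - δL ≤ max (f u) (l - δL) := le_max_right _ _
        rw [hydef]; linarith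
      have hy3 : y < l := by
        have h1 : max (f u) (l - δL) < l := max_lt hcase (by linarith)
        rw [hydef]; linarith
      have hz1 : l < f⁻¹ y := by
        have hyfl : y < f l := by linarith
        have := hfainv hyfl
        rwa [Equiv.Perm.inv_apply_self] at this
      have hz2 : f⁻¹ y < u := by
        have := hfainv hy1
        rwa [Equiv.Perm.inv_apply_self] at this
      have hzfix := hIcc (f⁻¹ y) (le_of_lt hz1) (le_of_lt hz2)
      have hyfix : f (f y) = y := by
        have h1 := Hf _ hzfix
        rwa [Equiv.Perm.apply_inv_self] at h1
      apply hFixFreeL (l - y) (by linarith) (by linarith)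
      rw [show l - (l - y) = y by ring]
      exact hyfix
    · exact hcase
    · exfalso
      have hfinvl : u < f⁻¹ l := by
        have := hfainv hcase
        rwa [Equiv.Perm.inv_apply_self] at this
      set y : ℝ := (u + min (f⁻¹ l) (u + δU)) / 2 with hydef
      have hmin : u < min (f⁻¹ l) (u + δU) := lt_min hfinvl (by linarith)
      have hy1 : u < y := by rw [hydef]; linarith
      have hy2 : y < f⁻¹ l := by
        have := min_le_left (f⁻¹ l) (u + δU)
        rw [hydef]; linarith
      have hy3 : y < u + δU := by
        have := min_le_right (f⁻¹ l) (u + δU)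
        rw [hydef]; linarith
      have hfy1 : l < f y := by
        have := hfa hy2
        rwa [Equiv.Perm.apply_inv_self] at this
      have hfy2 : f y < u := by
        have := hfa hy1
        linarith
      have hfyfix := hIcc (f y) (le_of_lt hfy1) (le_of_lt hfy2)
      have hyfix : f (f y) = y := f.injective hfyfix
      apply hFixFreeU (y - u) (by linarith) (by linarith)
      rw [show u + (y - u) = y by ring]
      exact hyfix
  have hflu : f l = u := by
    rw [← hful]
    exact hufix
  -- matching of slopes: sB = sC and sA = sD
  have hsBC : sB = sC := by
    set s : ℝ := min εB εC / 2 with hsdef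
    have hs0 : 0 < s := by
      have := lt_min hεB hεC
      rw [hsdef]; positivity
    have hs1 : s < εB := by
      have := min_le_left εB εC
      rw [hsdef]; linarith
    have hs2 : s < εC := by
      have := min_le_right εB εC
      rw [hsdef]; linarith
    have e1 := hB' s (le_of_lt hs0) hs1
    have e2 := hCraw s (le_of_lt hs0) hs2
    rw [hful] at e1
    rw [hflu] at e2
    have : sB * s = sC * s := by rw [e1] at e2; linarith
    exact mul_right_cancel₀ (ne_of_gt hs0) this
  have hsAD : sA = sD := by
    set s : ℝ := min εA εD / 2 with hsdef
    have hs0 : 0 < s := by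
      have := lt_min hεA hεD
      rw [hsdef]; positivity
    have hs1 : s < εA := by
      have := min_le_left εA εD
      rw [hsdef]; linarith
    have hs2 : s < εD := by
      have := min_le_right εA εD
      rw [hsdef]; linarith
    have e1 := hAraw s (le_of_lt hs0) hs1
    have e2 := hD' s (le_of_lt hs0) hs2
    rw [hful] at e1
    rw [hflu] at e2
    have : sA * s = sD * s := by rw [e1] at e2; linarith
    exact mul_right_cancel₀ (ne_of_gt hs0) this
  have hk2k : k2 = k := by rw [hk2def, hkdef, hsBC, hsAD]; ring
  -- h is strictly monotone or strictly antitone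
  have hhinvp : h⁻¹ p = p := by
    nth_rewrite 1 [← hhp]
    exact Equiv.Perm.inv_apply_self h p
  rcases Continuous.strictMono_of_inj hch h.injective with hmono | hanti
  · -- h increasing : h u = u
    have hinvmono : ∀ {a b : ℝ}, a < b → h⁻¹ a < h⁻¹ b := by
      intro a b hab
      rcases lt_trichotomy (h⁻¹ a) (h⁻¹ b) with hc | hc | hc
      · exact hc
      · exfalso
        have := congrArg (⇑h) hc
        rw [Equiv.Perm.apply_inv_self, Equiv.Perm.apply_inv_self] at this
        linarith
      · exfalso
        have := hmono hc
        rw [Equiv.Perm.apply_inv_self, Equiv.Perm.apply_inv_self] at this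
        linarith
    have hhu : h u = u := by
      rcases lt_trichotomy (h u) u with hcase | hcase | hcase
      · exfalso
        have h1 : u < h⁻¹ u := by
          have := hinvmono hcase
          rwa [Equiv.Perm.inv_apply_self] at this
        set y : ℝ := (u + min (h⁻¹ u) (u + δU)) / 2 with hydef
        have hmin : u < min (h⁻¹ u) (u + δU) := lt_min h1 (by linarith)
        have hy1 : u < y := by rw [hydef]; linarith
        have hy2 : y < h⁻¹ u := by
          have := min_le_left (h⁻¹ u) (u + δU)
          rw [hydef]; linarith
        have hy3 : y < u + δU := by
          have := min_le_right (h⁻¹ u) (u + δU)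
          rw [hydef]; linarith
        have hhy1 : h y < u := by
          have := hmono hy2
          rwa [Equiv.Perm.apply_inv_self] at this
        have hhy2 : p < h y := by
          have := hmono (show p < y by linarith)
          rwa [hhp] at this
        have hhyfix := hIcc (h y) (by linarith) (le_of_lt hhy1)
        have hyfix : f (f y) = y := by
          have := Hhinv _ hhyfix
          rwa [Equiv.Perm.inv_apply_self] at this
        apply hFixFreeU (y - u) (by linarith) (by linarith)
        rw [show u + (y - u) = y by ring]
        exact hyfix
      · exact hcase
      · exfalso
        set y : ℝ := (u + min (h u) (u + δU)) / 2 with hydef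
        have hmin : u < min (h u) (u + δU) := lt_min hcase (by linarith)
        have hy1 : u < y := by rw [hydef]; linarith
        have hy2 : y < h u := by
          have := min_le_left (h u) (u + δU)
          rw [hydef]; linarith
        have hy3 : y < u + δU := by
          have := min_le_right (h u) (u + δU)
          rw [hydef]; linarith
        have hz1 : h⁻¹ y < u := by
          have := hinvmono hy2
          rwa [Equiv.Perm.inv_apply_self] at this
        have hz2 : p < h⁻¹ y := by
          have := hinvmono (show p < y by linarith)
          rwa [hhinvp] at this
        have hzfix := hIcc (h⁻¹ y) (by linarith) (le_of_lt hz1)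
        have hyfix : f (f y) = y := by
          have := Hh _ hzfix
          rwa [Equiv.Perm.apply_inv_self] at this
        apply hFixFreeU (y - u) (by linarith) (by linarith)
        rw [show u + (y - u) = y by ring]
        exact hyfix
    obtain ⟨εE, hεE, c, hEraw⟩ := hh.right_affine u
    have hE' : ∀ t : ℝ, 0 ≤ t → t < εE → h (u + t) = u + c * t := fun t h1 h2 => by
      rw [hEraw t h1 h2, hhu]
    have hc : 0 < c := by
      have h1 := hEraw (εE/2) (by linarith) (by linarith)
      have h2 : h u < h (u + εE/2) := hmono (by linarith)
      nlinarith
    have hev : ∀ᶠ t in 𝓝[>] (0:ℝ), (k * (c * k)) * t = c * t := by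
      filter_upwards [ev_pos, ev_lt hδU, ev_small hk hεE,
        ev_small (mul_pos hc hk) hδU, ev_lt hεE] with t ht0 h2 h3 h4 h5
      have e1 : f (f (u + t)) = u + k * t := hkint t ht0 h2
      have e2 : h (u + k * t) = u + c * (k * t) :=
        hE' (k*t) (mul_nonneg (le_of_lt hk) (le_of_lt ht0)) h3
      have e3 : f (f (u + c * (k * t))) = u + k * ((c * k) * t) := by
        rw [show c * (k * t) = (c * k) * t by ring]
        exact hkint ((c*k)*t) (mul_pos (mul_pos hc hk) ht0) h4
      have e4 : h (u + t) = u + c * t := hE' t (le_of_lt ht0) h5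
      have key := E2 (u + t)
      rw [e1, e2, e3, e4] at key
      linear_combination key
    obtain ⟨t, hteq, ht0⟩ := (hev.and ev_pos).exists
    have e5 : k * (c * k) = c := mul_right_cancel₀ (ne_of_gt ht0) hteq
    have e6 : (k * k - 1) * c = 0 := by linear_combination e5
    rcases mul_eq_zero.1 e6 with h6 | h6
    · exact hkne (sq1 hk (by linarith))
    · linarith
  · -- h decreasing : h u = l
    have hinvanti : ∀ {a b : ℝ}, a < b → h⁻¹ b < h⁻¹ a := by
      intro a b hab
      rcases lt_trichotomy (h⁻¹ b) (h⁻¹ a) with hc | hc | hc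
      · exact hc
      · exfalso
        have := congrArg (⇑h) hc
        rw [Equiv.Perm.apply_inv_self, Equiv.Perm.apply_inv_self] at this
        linarith
      · exfalso
        have := hanti hc
        rw [Equiv.Perm.apply_inv_self, Equiv.Perm.apply_inv_self] at this
        linarith
    have hhup : h u < p := by
      have := hanti hpu
      rwa [hhp] at this
    have hhu : h u = l := by
      rcases lt_trichotomy (h u) l with hcase | hcase | hcase
      · exfalso
        set y : ℝ := (max (h u) (l - δL) + l) / 2 with hydef
        have hmax : max (h u) (l - δL) < l := max_lt hcase (by linarith)
        have hy1 : h u < y := by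
          have := le_max_left (h u) (l - δL)
          rw [hydef]; linarith
        have hy2 : l - δL < y := by
          have := le_max_right (h u) (l - δL)
          rw [hydef]; linarith
        have hy3 : y < l := by rw [hydef]; linarith
        have hz1 : p < h⁻¹ y := by
          have := hinvanti (show y < p by linarith)
          rwa [hhinvp] at this
        have hz2 : h⁻¹ y < u := by
          have := hinvanti hy1
          rwa [Equiv.Perm.inv_apply_self] at this
        have hzfix := hIcc (h⁻¹ y) (by linarith) (le_of_lt hz2)
        have hyfix : f (f y) = y := by
          have := Hh _ hzfix
          rwa [Equiv.Perm.apply_inv_self] at this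
        apply hFixFreeL (l - y) (by linarith) (by linarith)
        rw [show l - (l - y) = y by ring]
        exact hyfix
      · exact hcase
      · exfalso
        have h1 : u < h⁻¹ l := by
          have := hinvanti hcase
          rwa [Equiv.Perm.inv_apply_self] at this
        set y : ℝ := (u + min (h⁻¹ l) (u + δU)) / 2 with hydef
        have hmin : u < min (h⁻¹ l) (u + δU) := lt_min h1 (by linarith)
        have hy1 : u < y := by rw [hydef]; linarith
        have hy2 : y < h⁻¹ l := by
          have := min_le_left (h⁻¹ l) (u + δU)
          rw [hydef]; linarith
        have hy3 : y < u + δU := by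
          have := min_le_right (h⁻¹ l) (u + δU)
          rw [hydef]; linarith
        have hhy1 : l < h y := by
          have := hanti hy2
          rwa [Equiv.Perm.apply_inv_self] at this
        have hhy2 : h y < u := by
          have := hanti hy1
          linarith
        have hhyfix := hIcc (h y) (le_of_lt hhy1) (le_of_lt hhy2)
        have hyfix : f (f y) = y := by
          have := Hhinv _ hhyfix
          rwa [Equiv.Perm.inv_apply_self] at this
        apply hFixFreeU (y - u) (by linarith) (by linarith)
        rw [show u + (y - u) = y by ring]
        exact hyfix
    obtain ⟨εE, hεE, c, hEraw⟩ := hh.right_affine u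
    have hE' : ∀ t : ℝ, 0 ≤ t → t < εE → h (u + t) = l + c * t := fun t h1 h2 => by
      rw [hEraw t h1 h2, hhu]
    have hc : c < 0 := by
      have h1 := hEraw (εE/2) (by linarith) (by linarith)
      have h2 : h (u + εE/2) < h u := hanti (by linarith)
      nlinarith
    have hev : ∀ᶠ t in 𝓝[>] (0:ℝ), (k * (k * c)) * t = c * t := by
      filter_upwards [ev_pos, ev_lt hδU, ev_small hk hεE,
        ev_small (mul_pos (neg_pos.2 hc) hk) hδL, ev_lt hεE] with t ht0 h2 h3 h4 h5
      have e1 : f (f (u + t)) = u + k * t := hkint t ht0 h2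
      have e2 : h (u + k * t) = l + c * (k * t) :=
        hE' (k*t) (mul_nonneg (le_of_lt hk) (le_of_lt ht0)) h3
      have e3 : f (f (l + c * (k * t))) = l - k2 * (((-c) * k) * t) := by
        rw [show l + c * (k * t) = l - ((-c) * k) * t by ring]
        exact hk2int (((-c)*k)*t) (mul_pos (mul_pos (neg_pos.2 hc) hk) ht0) h4
      rw [hk2k] at e3
      have e4 : h (u + t) = l + c * t := hE' t (le_of_lt ht0) h5
      have key := E2 (u + t)
      rw [e1, e2, e3, e4] at key
      linear_combination key
    obtain ⟨t, hteq, ht0⟩ := (hev.and ev_pos).exists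
    have e5 : k * (k * c) = c := mul_right_cancel₀ (ne_of_gt ht0) hteq
    have e6 : (k * k - 1) * c = 0 := by linear_combination e5
    rcases mul_eq_zero.1 e6 with h6 | h6
    · exact hkne (sq1 hk (by linarith))
    · linarith
/-- A strictly decreasing element of PL(ℝ) is reversible in PL(ℝ) iff it is an involution. -/
theorem stmt_14 (f : Equiv.Perm ℝ) (hf : InPL f) (hfa : StrictAnti (⇑f)) :
    (∃ h : Equiv.Perm ℝ, InPL h ∧ h * f * h⁻¹ = f⁻¹) ↔ f * f = 1 := by
  constructor
  · rintro ⟨h, hh, hconj⟩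
    have hfx := forward f h hf hfa hh hconj
    ext x
    simpa [Equiv.Perm.mul_apply] using hfx x
  · intro hff
    refine ⟨1, ⟨⟨?_, ?_⟩, ?_⟩, ?_⟩
    · show Continuous ⇑(1 : Equiv.Perm ℝ)
      simpa [Equiv.Perm.coe_one] using continuous_id
    · show Continuous ⇑(1 : Equiv.Perm ℝ).symm
      exact continuous_id
    · intro x hacc
      rw [accPt_iff_nhds] at hacc
      obtain ⟨y, ⟨_, hy⟩, _⟩ := hacc univ univ_mem
      exact hy ⟨1, 0, Filter.Eventually.of_forall (fun z => by simp)⟩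
    · rw [inv_one, one_mul, mul_one]
      exact mul_eq_one_iff_eq_inv.1 hff
end

section
/- Let f be an element of PL⁺(ℝ) with no fixed point. If f(x) > x for all x ∈ ℝ, then there exists h ∈ PL⁺(ℝ) with h(f(h⁻¹(x))) = x + 1 for all x; if f(x) < x for all x ∈ ℝ, then there exists h ∈ PL⁺(ℝ) with h(f(h⁻¹(x))) = x − 1 for all x. Consequently the fixed point free elements of PL⁺(ℝ) fall into exactly two conjugacy classes in PL⁺(ℝ): that of x ↦ x + 1 and that of x ↦ x − 1. -/
open Filter Set


-- "no accumulation point" predicate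
def NoAcc (s : Set ℝ) : Prop := ∀ x : ℝ, ¬ AccPt x (Filter.principal s)

lemma noAcc_mono {s t : Set ℝ} (h : s ⊆ t) (ht : NoAcc t) : NoAcc s := by
  intro x hx
  exact ht x (hx.mono (Filter.principal_mono.2 h))

lemma noAcc_union {s t : Set ℝ} (hs : NoAcc s) (ht : NoAcc t) : NoAcc (s ∪ t) := by
  intro x hx
  rw [← Filter.sup_principal] at hx
  rcases accPt_sup.1 hx with h | h
  · exact hs x h
  · exact ht x h

lemma noAcc_singleton (a : ℝ) : NoAcc {a} := by
  intro x hx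
  rw [accPt_iff_nhds] at hx
  by_cases hax : a = x
  · rcases hx univ univ_mem with ⟨y, ⟨-, hy⟩, hyx⟩
    exact hyx (hy.trans hax)
  · rcases hx {a}ᶜ (isOpen_compl_singleton.mem_nhds (by simpa using Ne.symm hax)) with
      ⟨y, ⟨hy1, hy2⟩, -⟩
    exact hy1 hy2

lemma noAcc_empty : NoAcc (∅ : Set ℝ) := by
  intro x hx
  rw [accPt_iff_nhds] at hx
  rcases hx univ univ_mem with ⟨y, ⟨-, hy⟩, -⟩
  exact hy

lemma noAcc_image (g : Equiv.Perm ℝ) (hg : Continuous g.symm) {s : Set ℝ} (hs : NoAcc s) :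
    NoAcc (⇑g '' s) := by
  intro x hx
  rw [accPt_iff_nhds] at hx
  have hnot := hs (g.symm x)
  rw [accPt_iff_nhds] at hnot
  push_neg at hnot
  obtain ⟨U, hU, hUs⟩ := hnot
  have hV : (⇑g.symm) ⁻¹' U ∈ nhds x := by
    have : Filter.Tendsto (⇑g.symm) (nhds x) (nhds (g.symm x)) := hg.continuousAt
    exact this hU
  rcases hx _ hV with ⟨y, ⟨hy1, hy2⟩, hyx⟩
  rcases hy2 with ⟨w, hw, rfl⟩
  have hww : g.symm (g w) = g.symm x := hUs _ ⟨by simpa using hy1, by simpa using hw⟩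
  exact hyx (by simpa using congrArg g hww)

lemma locAff_comp {g k : ℝ → ℝ} {x : ℝ} (hgc : Continuous g)
    (hg : IsLocallyAffineAt g x) (hk : IsLocallyAffineAt k (g x)) :
    IsLocallyAffineAt (fun y => k (g y)) x := by
  obtain ⟨a, b, hab⟩ := hg
  obtain ⟨a', b', hab'⟩ := hk
  refine ⟨a' * a, a' * b + b', ?_⟩
  have h2 : ∀ᶠ y in nhds x, k (g y) = a' * (g y) + b' :=
    (hgc.continuousAt (x := x)).eventually hab'
  filter_upwards [hab, h2] with y h1 h2
  rw [h2, h1]; ring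

lemma locAff_inv (g : Equiv.Perm ℝ) (hgs : Continuous g.symm) {x : ℝ}
    (hg : IsLocallyAffineAt (⇑g) x) : IsLocallyAffineAt (⇑g.symm) (g x) := by
  obtain ⟨a, b, hab⟩ := hg
  have hx : g x = a * x + b := hab.self_of_nhds
  -- a ≠ 0
  have ha : a ≠ 0 := by
    intro ha0
    obtain ⟨y, hy, hyx⟩ : ∃ y, g y = a * y + b ∧ y ≠ x := by
      have hne : ∀ᶠ y in nhdsWithin x {x}ᶜ, g y = a * y + b ∧ y ≠ x := by
        filter_upwards [hab.filter_mono nhdsWithin_le_nhds, self_mem_nhdsWithin] with y h1 h2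
        exact ⟨h1, h2⟩
      exact hne.exists
    have : g y = g x := by rw [hy, hx, ha0]; ring
    exact hyx (g.injective this)
  refine ⟨a⁻¹, -b * a⁻¹, ?_⟩
  have h2 : ∀ᶠ z in nhds (g x), g.symm z ∈ {y | g y = a * y + b} := by
    have ht : Filter.Tendsto (⇑g.symm) (nhds (g x)) (nhds x) := by
      have h := hgs.continuousAt (x := g x)
      rwa [ContinuousAt, g.symm_apply_apply] at h
    exact ht hab
  filter_upwards [h2] with z hz
  have : g (g.symm z) = a * g.symm z + b := hz
  rw [g.apply_symm_apply] at this
  field_simp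
  linarith

def Bad (g : Equiv.Perm ℝ) : Set ℝ := {x : ℝ | ¬ IsLocallyAffineAt (⇑g) x}

lemma inPL_iff (g : Equiv.Perm ℝ) : InPL g ↔ IsHomeo g ∧ NoAcc (Bad g) := Iff.rfl

lemma isHomeo_mul {g₁ g₂ : Equiv.Perm ℝ} (h1 : IsHomeo g₁) (h2 : IsHomeo g₂) :
    IsHomeo (g₁ * g₂) := by
  constructor
  · have : ⇑(g₁ * g₂) = ⇑g₁ ∘ ⇑g₂ := by ext x; simp [Equiv.Perm.mul_apply]
    rw [this]; exact h1.1.comp h2.1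
  · have : ⇑(g₁ * g₂).symm = ⇑g₂.symm ∘ ⇑g₁.symm := by
      ext x; simp [Equiv.Perm.mul_apply]; rfl
    rw [this]; exact h2.2.comp h1.2

lemma isHomeo_inv {g : Equiv.Perm ℝ} (h : IsHomeo g) : IsHomeo g⁻¹ := by
  constructor
  · exact h.2
  · have : ⇑(g⁻¹ : Equiv.Perm ℝ).symm = ⇑g := rfl
    rw [this]; exact h.1

lemma inPL_mul {g₁ g₂ : Equiv.Perm ℝ} (h1 : InPL g₁) (h2 : InPL g₂) : InPL (g₁ * g₂) := by
  refine ⟨isHomeo_mul h1.1 h2.1, ?_⟩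
  have hsub : Bad (g₁ * g₂) ⊆ Bad g₂ ∪ (⇑g₂.symm '' Bad g₁) := by
    intro x hx
    by_contra hcon
    rw [Set.mem_union, not_or] at hcon
    obtain ⟨hA, hB⟩ := hcon
    have hg2 : IsLocallyAffineAt (⇑g₂) x := not_not.1 hA
    have hg1 : IsLocallyAffineAt (⇑g₁) (g₂ x) := by
      by_contra hc
      exact hB ⟨g₂ x, hc, by simp⟩
    exact hx (by
      have := locAff_comp h2.1.1 hg2 hg1
      have he : ⇑(g₁ * g₂) = fun y => g₁ (g₂ y) := by ext y; simp [Equiv.Perm.mul_apply]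
      rw [he]
      exact this)
  exact fun x hx => (noAcc_mono hsub (noAcc_union h2.2 (noAcc_image g₂.symm
    (by simpa using h2.1.1) h1.2))) x hx

lemma inPL_inv {g : Equiv.Perm ℝ} (h : InPL g) : InPL g⁻¹ := by
  refine ⟨isHomeo_inv h.1, ?_⟩
  have hsub : Bad g⁻¹ ⊆ ⇑g '' Bad g := by
    intro x hx
    by_contra hcon
    have hg : IsLocallyAffineAt (⇑g) (g.symm x) := by
      by_contra hc
      exact hcon ⟨g.symm x, hc, by simp⟩
    have := locAff_inv g h.1.2 hg
    rw [g.apply_symm_apply] at this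
    exact hx this
  exact noAcc_mono hsub (noAcc_image g h.1.2 h.2)

lemma inPL_one : InPL (1 : Equiv.Perm ℝ) := by
  refine ⟨⟨continuous_id, continuous_id⟩, ?_⟩
  have : Bad (1 : Equiv.Perm ℝ) = ∅ := by
    ext x; simp only [Bad, Set.mem_setOf_eq, Set.mem_empty_iff_false, iff_false, not_not]
    exact ⟨1, 0, by filter_upwards with y; simp⟩
  exact fun x hx => noAcc_empty x (by rwa [← this])

lemma inPL_zpow {g : Equiv.Perm ℝ} (h : InPL g) (k : ℤ) : InPL (g ^ k) := by
  have hn : ∀ n : ℕ, InPL (g ^ (n : ℤ)) := by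
    intro n
    induction n with
    | zero => simpa using inPL_one
    | succ m ih =>
      have : g ^ ((m + 1 : ℕ) : ℤ) = g ^ (m : ℤ) * g := by
        push_cast; rw [zpow_add_one]
      rw [this]
      exact inPL_mul ih (by simpa using h)
  rcases k with n | n
  · exact hn n
  · have : g ^ (Int.negSucc n) = (g ^ ((n + 1 : ℕ) : ℤ))⁻¹ := by
      rw [zpow_negSucc, ← zpow_natCast]
    rw [this]
    exact inPL_inv (hn _)

lemma strictMono_zpow {g : Equiv.Perm ℝ} (hg : StrictMono ⇑g) (k : ℤ) :
    StrictMono ⇑(g ^ k) := by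
  have hinv : StrictMono ⇑g⁻¹ := by
    intro a b hab
    have := hg.lt_iff_lt (a := g⁻¹ a) (b := g⁻¹ b)
    simp only [← Equiv.Perm.mul_apply, mul_inv_cancel, Equiv.Perm.one_apply] at this
    exact this.1 hab
  have hn : ∀ (p : Equiv.Perm ℝ), StrictMono ⇑p → ∀ n : ℕ, StrictMono ⇑(p ^ n) := by
    intro p hp n
    induction n with
    | zero => simpa using strictMono_id
    | succ m ih =>
      have : p ^ (m + 1) = p ^ m * p := pow_succ p m
      rw [this]
      intro a b hab
      rw [Equiv.Perm.mul_apply, Equiv.Perm.mul_apply]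
      exact ih (hp hab)
  rcases k with n | n
  · simpa [zpow_natCast] using hn g hg n
  · rw [zpow_negSucc]
    have : ((g ^ (n + 1))⁻¹ : Equiv.Perm ℝ) = (g⁻¹) ^ (n + 1) := by rw [inv_pow]
    rw [this]
    exact hn g⁻¹ hinv (n + 1)

section Main

variable (f : Equiv.Perm ℝ)

noncomputable def phi : ℤ → ℝ := fun n => (f ^ n) 0

variable {f}

lemma phi_step (n : ℤ) : phi f (n + 1) = f (phi f n) := by
  show (f ^ (n + 1)) 0 = f ((f ^ n) 0)
  rw [add_comm, zpow_one_add]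
  rfl

lemma phi_mono (hlt : ∀ x, x < f x) : StrictMono (phi f) :=
  strictMono_int_of_lt_succ (fun n => by rw [phi_step]; exact hlt _)

lemma phi_top (hcont : Continuous ⇑f) (hlt : ∀ x, x < f x) (x : ℝ) : ∃ n : ℤ, x < phi f n := by
  by_contra hcon
  push_neg at hcon
  set s : ℕ → ℝ := fun n => phi f n with hs
  have hmono : Monotone s := fun a b hab => (phi_mono hlt).monotone (by exact_mod_cast hab)
  have hbdd : BddAbove (Set.range s) := ⟨x, by rintro y ⟨n, rfl⟩; exact hcon _⟩
  set L := ⨆ n, s n with hL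
  have h1 : Filter.Tendsto s Filter.atTop (nhds L) := tendsto_atTop_ciSup hmono hbdd
  have h2 : Filter.Tendsto (fun n => s (n + 1)) Filter.atTop (nhds L) :=
    h1.comp (Filter.tendsto_add_atTop_nat 1)
  have h3 : Filter.Tendsto (fun n => f (s n)) Filter.atTop (nhds (f L)) :=
    (hcont.continuousAt.tendsto).comp h1
  have heq : (fun n => s (n + 1)) = fun n => f (s n) := by
    funext n
    show phi f ((n : ℤ) + 1) = f (phi f n)
    · exact_mod_cast phi_step (n : ℤ)
  rw [heq] at h2
  exact absurd (tendsto_nhds_unique h2 h3) (hlt L).ne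

lemma phi_bot (hconts : Continuous ⇑f.symm) (hlt : ∀ x, x < f x) (x : ℝ) :
    ∃ n : ℤ, phi f n ≤ x := by
  by_contra hcon
  push_neg at hcon
  set t : ℕ → ℝ := fun n => phi f (-n) with ht
  have hanti : Antitone t := fun a b hab => (phi_mono hlt).monotone (by
    simp only [neg_le_neg_iff]; exact_mod_cast hab)
  have hbdd : BddBelow (Set.range t) := ⟨x, by rintro y ⟨n, rfl⟩; exact (hcon _).le⟩
  set L := ⨅ n, t n with hL
  have h1 : Filter.Tendsto t Filter.atTop (nhds L) := tendsto_atTop_ciInf hanti hbdd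
  have h2 : Filter.Tendsto (fun n => t (n + 1)) Filter.atTop (nhds L) :=
    h1.comp (Filter.tendsto_add_atTop_nat 1)
  have h3 : Filter.Tendsto (fun n => f.symm (t n)) Filter.atTop (nhds (f.symm L)) :=
    (hconts.continuousAt.tendsto).comp h1
  have heq : (fun n => t (n + 1)) = fun n => f.symm (t n) := by
    funext n
    show phi f (-((n : ℤ) + 1)) = f.symm (phi f (-(n : ℤ)))
    · have := phi_step (f := f) (-((n : ℤ) + 1))
      have h4 : (-((n : ℤ) + 1)) + 1 = -(n : ℤ) := by ring
      rw [h4] at this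
      rw [this]
      simp
  rw [heq] at h2
  have hfix : f.symm L = L := tendsto_nhds_unique h3 h2
  have : f L = L := by
    conv_lhs => rw [← hfix]
    simp
  exact absurd this (hlt L).ne'

lemma exists_N (hcont : Continuous ⇑f) (hconts : Continuous ⇑f.symm)
    (hlt : ∀ x, x < f x) (x : ℝ) : ∃ n : ℤ, phi f n ≤ x ∧ x < phi f (n + 1) := by
  obtain ⟨m, hm⟩ := phi_top hcont hlt x
  obtain ⟨n, hn, hmax⟩ := Int.exists_greatest_of_bdd
    (P := fun n => phi f n ≤ x)
    ⟨m, fun z hz => ((phi_mono hlt).lt_iff_lt.1 (lt_of_le_of_lt hz hm)).le⟩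
    (phi_bot hconts hlt x)
  refine ⟨n, hn, ?_⟩
  by_contra hcon
  push_neg at hcon
  exact absurd (hmax _ hcon) (by omega)

variable (f)

open Classical in
noncomputable def NN (x : ℝ) : ℤ :=
  if hh : ∃ n : ℤ, phi f n ≤ x ∧ x < phi f (n + 1) then hh.choose else 0

noncomputable def HH : ℝ → ℝ := fun x => (NN f x : ℝ) + (f ^ (-(NN f x))) x / f 0

variable {f}

lemma NN_spec (hcont : Continuous ⇑f) (hconts : Continuous ⇑f.symm)
    (hlt : ∀ x, x < f x) (x : ℝ) :
    phi f (NN f x) ≤ x ∧ x < phi f (NN f x + 1) := by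
  have hh := exists_N hcont hconts hlt x
  rw [NN]
  rw [dif_pos hh]
  exact hh.choose_spec

lemma NN_unique (hlt : ∀ x, x < f x) {x : ℝ} {n m : ℤ}
    (h1 : phi f n ≤ x) (h2 : x < phi f (n + 1)) (h3 : phi f m ≤ x) (h4 : x < phi f (m + 1)) :
    m = n := by
  by_contra hcon
  rcases lt_or_gt_of_ne hcon with h | h
  · exact absurd (le_trans ((phi_mono hlt).monotone (by omega : m + 1 ≤ n)) h1)
      (not_le.2 h4)
  · exact absurd (le_trans ((phi_mono hlt).monotone (by omega : n + 1 ≤ m)) h3)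
      (not_le.2 h2)

lemma NN_eq (hcont : Continuous ⇑f) (hconts : Continuous ⇑f.symm)
    (hlt : ∀ x, x < f x) {x : ℝ} {n : ℤ}
    (h1 : phi f n ≤ x) (h2 : x < phi f (n + 1)) : NN f x = n := by
  obtain ⟨h3, h4⟩ := NN_spec hcont hconts hlt x
  exact NN_unique hlt h1 h2 h3 h4

lemma zpow_cancel (n : ℤ) (z : ℝ) : (f ^ (-n)) ((f ^ n) z) = z := by
  rw [← Equiv.Perm.mul_apply, ← zpow_add]
  simp

lemma HH_eq (hcont : Continuous ⇑f) (hconts : Continuous ⇑f.symm)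
    (hlt : ∀ x, x < f x) {x : ℝ} {n : ℤ}
    (h1 : phi f n ≤ x) (h2 : x < phi f (n + 1)) :
    HH f x = (n : ℝ) + (f ^ (-n)) x / f 0 := by
  rw [HH, NN_eq hcont hconts hlt h1 h2]

end Main

lemma accPt_inter {B U : Set ℝ} {x : ℝ} (h : AccPt x (Filter.principal B))
    (hU : U ∈ nhds x) : AccPt x (Filter.principal (B ∩ U)) := by
  rw [accPt_iff_nhds] at h ⊢
  intro V hV
  rcases h (V ∩ U) (Filter.inter_mem hV hU) with ⟨y, ⟨⟨hyV, hyU⟩, hyB⟩, hyx⟩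
  exact ⟨y, ⟨hyV, hyB, hyU⟩, hyx⟩

section Main2

variable {f : Equiv.Perm ℝ}

lemma inv_nonneg' (hfm : StrictMono ⇑f) {n : ℤ} {x : ℝ} (h1 : phi f n ≤ x) :
    0 ≤ (f ^ (-n)) x := by
  have h := (strictMono_zpow hfm (-n)).monotone h1
  rwa [show (f ^ (-n)) (phi f n) = 0 from zpow_cancel n 0] at h

lemma inv_lt_c (hfm : StrictMono ⇑f) {n : ℤ} {x : ℝ} (h2 : x < phi f (n + 1)) :
    (f ^ (-n)) x < f 0 := by
  have h := strictMono_zpow hfm (-n) h2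
  rwa [show (f ^ (-n)) (phi f (n + 1)) = f 0 from by
    show (f ^ (-n)) ((f ^ (n + 1)) 0) = f 0
    rw [← Equiv.Perm.mul_apply, ← zpow_add]
    norm_num] at h

lemma HH_strictMono (hcont : Continuous ⇑f) (hconts : Continuous ⇑f.symm)
    (hlt : ∀ x, x < f x) (hfm : StrictMono ⇑f) : StrictMono (HH f) := by
  intro x y hxy
  obtain ⟨hx1, hx2⟩ := NN_spec hcont hconts hlt x
  obtain ⟨hy1, hy2⟩ := NN_spec hcont hconts hlt y
  have hc : (0 : ℝ) < f 0 := hlt 0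
  have hnm : NN f x ≤ NN f y := by
    by_contra hcon
    push_neg at hcon
    exact absurd (le_trans ((phi_mono hlt).monotone (by omega : NN f y + 1 ≤ NN f x))
      (hx1.trans hxy.le)) (not_le.2 hy2)
  rcases eq_or_lt_of_le hnm with heq | hlt'
  · show (NN f x : ℝ) + (f ^ (-(NN f x))) x / f 0 < (NN f y : ℝ) + (f ^ (-(NN f y))) y / f 0
    rw [← heq]
    have h := strictMono_zpow hfm (-(NN f x)) hxy
    have : (f ^ (-(NN f x))) x / f 0 < (f ^ (-(NN f x))) y / f 0 := by gcongr
    linarith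
  · show (NN f x : ℝ) + (f ^ (-(NN f x))) x / f 0 < (NN f y : ℝ) + (f ^ (-(NN f y))) y / f 0
    have hxlt : (f ^ (-(NN f x))) x / f 0 < 1 := by
      rw [div_lt_one hc]; exact inv_lt_c hfm hx2
    have hyge : 0 ≤ (f ^ (-(NN f y))) y / f 0 := div_nonneg (inv_nonneg' hfm hy1) hc.le
    have hcast : (NN f x : ℝ) + 1 ≤ (NN f y : ℝ) := by exact_mod_cast hlt'
    linarith

lemma HH_surj (hcont : Continuous ⇑f) (hconts : Continuous ⇑f.symm)
    (hlt : ∀ x, x < f x) (hfm : StrictMono ⇑f) : Function.Surjective (HH f) := by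
  intro z
  have hc : (0 : ℝ) < f 0 := hlt 0
  set n : ℤ := ⌊z⌋ with hn
  set t : ℝ := Int.fract z with ht
  refine ⟨(f ^ n) (t * f 0), ?_⟩
  have h1 : phi f n ≤ (f ^ n) (t * f 0) :=
    (strictMono_zpow hfm n).monotone (mul_nonneg (Int.fract_nonneg z) hc.le)
  have h2 : (f ^ n) (t * f 0) < phi f (n + 1) := by
    have : phi f (n + 1) = (f ^ n) (f 0) := by
      show (f ^ (n + 1)) 0 = (f ^ n) (f 0)
      rw [zpow_add_one, Equiv.Perm.mul_apply]
    rw [this]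
    exact strictMono_zpow hfm n (mul_lt_of_lt_one_left hc (Int.fract_lt_one z))
  rw [HH_eq hcont hconts hlt h1 h2, zpow_cancel, mul_div_cancel_right₀ t hc.ne']
  rw [hn, ht]
  exact Int.floor_add_fract z

lemma HH_conj (hcont : Continuous ⇑f) (hconts : Continuous ⇑f.symm)
    (hlt : ∀ x, x < f x) (hfm : StrictMono ⇑f) (x : ℝ) : HH f (f x) = HH f x + 1 := by
  obtain ⟨hx1, hx2⟩ := NN_spec hcont hconts hlt x
  set n := NN f x with hn
  have h1 : phi f (n + 1) ≤ f x := by rw [phi_step]; exact hfm.monotone hx1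
  have h2 : f x < phi f (n + 1 + 1) := by rw [phi_step]; exact hfm hx2
  rw [HH_eq hcont hconts hlt h1 h2, HH_eq hcont hconts hlt hx1 hx2]
  have hkey : (f ^ (-(n + 1))) (f x) = (f ^ (-n)) x := by
    conv_lhs => rw [show (f : Equiv.Perm ℝ) x = (f ^ (1 : ℤ)) x from by rw [zpow_one]]
    rw [← Equiv.Perm.mul_apply, ← zpow_add]
    norm_num
  rw [hkey]
  push_cast
  ring

lemma HH_locAff (hcont : Continuous ⇑f) (hconts : Continuous ⇑f.symm)
    (hlt : ∀ x, x < f x) {n : ℤ} {y : ℝ}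
    (h1 : phi f n < y) (h2 : y < phi f (n + 1))
    (ha : IsLocallyAffineAt ⇑(f ^ (-n)) y) : IsLocallyAffineAt (HH f) y := by
  obtain ⟨a, b, hab⟩ := ha
  refine ⟨a / f 0, (n : ℝ) + b / f 0, ?_⟩
  have hU : Set.Ioo (phi f n) (phi f (n + 1)) ∈ nhds y := isOpen_Ioo.mem_nhds ⟨h1, h2⟩
  filter_upwards [hab, hU] with z hz hzU
  rw [HH_eq hcont hconts hlt hzU.1.le hzU.2, hz]
  ring

lemma HH_noAcc (hfPL : InPL f) (hfm : StrictMono ⇑f) (hlt : ∀ x, x < f x) :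
    NoAcc {x : ℝ | ¬ IsLocallyAffineAt (HH f) x} := by
  intro x hacc
  have hcont := hfPL.1.1
  have hconts := hfPL.1.2
  obtain ⟨hx1, hx2⟩ := NN_spec hcont hconts hlt x
  set n := NN f x with hn
  set U := Set.Ioo (phi f (n - 1)) (phi f (n + 2)) with hU
  have hUx : U ∈ nhds x := isOpen_Ioo.mem_nhds
    ⟨lt_of_lt_of_le (phi_mono hlt (by omega)) hx1,
     lt_trans hx2 (phi_mono hlt (by omega))⟩
  set T : Set ℝ := {phi f n} ∪ {phi f (n + 1)} ∪ Bad (f ^ (-(n - 1))) ∪ Bad (f ^ (-n))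
      ∪ Bad (f ^ (-(n + 1))) with hT
  have hTnoacc : NoAcc T :=
    noAcc_union (noAcc_union (noAcc_union (noAcc_union (noAcc_singleton _)
      (noAcc_singleton _)) (inPL_zpow hfPL _).2) (inPL_zpow hfPL _).2) (inPL_zpow hfPL _).2
  have hacc2 := accPt_inter hacc hUx
  have hsub : {x : ℝ | ¬ IsLocallyAffineAt (HH f) x} ∩ U ⊆ T := by
    rintro y ⟨hyB, hyU1, hyU2⟩
    obtain ⟨hy1, hy2⟩ := NN_spec hcont hconts hlt y
    set m := NN f y with hm
    have hm1 : n - 1 ≤ m := by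
      by_contra hcon
      push_neg at hcon
      have h3 : phi f (m + 1) ≤ phi f (n - 1) := (phi_mono hlt).monotone (by omega)
      linarith
    have hm2 : m ≤ n + 1 := by
      by_contra hcon
      push_neg at hcon
      have h3 : phi f (n + 2) ≤ phi f m := (phi_mono hlt).monotone (by omega)
      linarith
    by_cases hy : phi f m = y
    · have hmn : m ≠ n - 1 := by
        intro hcon
        rw [hcon] at hy
        linarith
      have hcase : m = n ∨ m = n + 1 := by omega
      rcases hcase with hcase | hcase
      · rw [hcase] at hy
        exact Or.inl (Or.inl (Or.inl (Or.inl hy.symm)))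
      · rw [hcase] at hy
        exact Or.inl (Or.inl (Or.inl (Or.inr hy.symm)))
    · have hy1' : phi f m < y := lt_of_le_of_ne hy1 hy
      have hbad : y ∈ Bad (f ^ (-m)) := by
        by_contra hc2
        exact hyB (HH_locAff hcont hconts hlt hy1' hy2 (not_not.1 hc2))
      have hcase : m = n - 1 ∨ m = n ∨ m = n + 1 := by omega
      rcases hcase with hcase | hcase | hcase
      all_goals rw [hcase] at hbad
      · exact Or.inl (Or.inl (Or.inr hbad))
      · exact Or.inl (Or.inr hbad)
      · exact Or.inr hbad
  exact hTnoacc x (hacc2.mono (Filter.principal_mono.2 hsub))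

end Main2

section Assemble
variable {f : Equiv.Perm ℝ}

lemma conj_plus (hfPL : InPL f) (hfm : StrictMono ⇑f) (hlt : ∀ x, x < f x) :
    ∃ h : Equiv.Perm ℝ, InPL h ∧ StrictMono (⇑h) ∧ ∀ y : ℝ, h (f y) = h y + 1 := by
  have hcont := hfPL.1.1
  have hconts := hfPL.1.2
  have hm := HH_strictMono hcont hconts hlt hfm
  have hs := HH_surj hcont hconts hlt hfm
  let iso : ℝ ≃o ℝ := StrictMono.orderIsoOfSurjective (HH f) hm hs
  have hcoe : ⇑iso.toEquiv = HH f := rfl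
  refine ⟨iso.toEquiv, ⟨⟨?_, ?_⟩, ?_⟩, ?_, ?_⟩
  · exact iso.continuous
  · exact iso.symm.continuous
  · rw [hcoe]
    exact fun x => HH_noAcc hfPL hfm hlt x
  · rw [hcoe]; exact hm
  · intro y
    show HH f (f y) = HH f y + 1
    exact HH_conj hcont hconts hlt hfm y

lemma strictMono_symm (hfm : StrictMono ⇑f) : StrictMono ⇑f.symm := by
  intro a b hab
  have h := hfm.lt_iff_lt (a := f.symm a) (b := f.symm b)
  rw [f.apply_symm_apply, f.apply_symm_apply] at h
  exact h.1 hab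

end Assemble

/-- A fixed point free element of PL⁺(ℝ) is conjugate in PL⁺(ℝ) to x ↦ x + 1 if it moves
every point to the right, and to x ↦ x - 1 if it moves every point to the left; moreover
these two translations are not conjugate in PL⁺(ℝ), so the fixed point free elements of
PL⁺(ℝ) fall into exactly these two conjugacy classes. -/
theorem stmt_15 (f : Equiv.Perm ℝ) (hf : InPL f) (hfm : StrictMono (⇑f))
    (hfp : ∀ x : ℝ, f x ≠ x) :
    ((∀ x : ℝ, x < f x) →
      ∃ h : Equiv.Perm ℝ, InPL h ∧ StrictMono (⇑h) ∧ ∀ x : ℝ, h (f (h⁻¹ x)) = x + 1) ∧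
    ((∀ x : ℝ, f x < x) →
      ∃ h : Equiv.Perm ℝ, InPL h ∧ StrictMono (⇑h) ∧ ∀ x : ℝ, h (f (h⁻¹ x)) = x - 1) ∧
    ¬ (∃ h : Equiv.Perm ℝ, InPL h ∧ StrictMono (⇑h) ∧ ∀ x : ℝ, h (x + 1) = h x - 1) := by
  refine ⟨?_, ?_, ?_⟩
  · intro hpos
    obtain ⟨h, hPL, hmono, hconj⟩ := conj_plus hf hfm hpos
    refine ⟨h, hPL, hmono, fun x => ?_⟩
    have := hconj (h⁻¹ x)
    rw [this]
    congr 1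
    show h (h.symm x) = x
    exact h.apply_symm_apply x
  · intro hneg
    have hfinv : ∀ x, x < f⁻¹ x := by
      intro x
      have := hneg ((f⁻¹ : Equiv.Perm ℝ) x)
      have happ : f ((f⁻¹ : Equiv.Perm ℝ) x) = x := by
        show f (f.symm x) = x
        exact f.apply_symm_apply x
      rwa [happ] at this
    obtain ⟨h, hPL, hmono, hconj⟩ := conj_plus (inPL_inv hf) (strictMono_symm hfm) hfinv
    refine ⟨h, hPL, hmono, fun x => ?_⟩
    have key := hconj (f (h⁻¹ x))
    have h1 : (f⁻¹ : Equiv.Perm ℝ) (f (h⁻¹ x)) = h⁻¹ x := by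
      show f.symm (f _) = _
      exact f.symm_apply_apply _
    rw [h1] at key
    have h2 : h (h⁻¹ x) = x := by
      show h (h.symm x) = x
      exact h.apply_symm_apply x
    rw [h2] at key
    linarith
  · rintro ⟨h, -, hmono, hcomm⟩
    have h1 := hcomm 0
    have h2 : h 0 < h (0 + 1) := hmono (by linarith)
    linarith
end
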